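/- arXiv:1111.6224 — 9 statements merged into one kernel-verified Lean document; each statement's English description precedes it below -/
import Mathlib

section
/- For a point x = (x_1,…,x_d) ∈ [0,1]^d, the volume of the set B_{d-1}(x) of points in [0,1]^d that (d-1)-dominate x equals ∑_{ℓ=1}^{d} ∏_{j≠ℓ} x_j − (d−1) ∏_{j=1}^{d} x_j. -/
open MeasureTheory Finset

/-- `p` k-dominates `q`: `p j ≤ q j` in at least `k` coordinates, with strict
inequality in at least one of those coordinates. -/
def KDominates {d : ℕ} (k : ℕ) (p q : Fin d → ℝ) : Prop :=
  ∃ S : Finset (Fin d), k ≤ S.card ∧ (∀ j ∈ S, p j ≤ q j) ∧ ∃ j ∈ S, p j < q j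

/-- The volume of the set of points of `[0,1]^d` that `(d-1)`-dominate
`x ∈ [0,1]^d` equals `∑_ℓ ∏_{j ≠ ℓ} x_j − (d−1) ∏_j x_j`. -/
theorem volume_B_dsub1 (d : ℕ) (hd : 2 ≤ d) (x : Fin d → ℝ)
    (hx : ∀ j, x j ∈ Set.Icc (0 : ℝ) 1) :
    volume {y : Fin d → ℝ |
        (∀ j, y j ∈ Set.Icc (0 : ℝ) 1) ∧ KDominates (d - 1) y x} =
      ENNReal.ofReal
        (∑ ℓ : Fin d, ∏ j ∈ Finset.univ.erase ℓ, x j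
          - (d - 1 : ℝ) * ∏ j : Fin d, x j) := by
  classical
  have hd0 : 0 < d := by omega
  have hx0 : ∀ j, 0 ≤ x j := fun j => (hx j).1
  have hx1 : ∀ j, x j ≤ 1 := fun j => (hx j).2
  set C : Set (Fin d → ℝ) := Set.univ.pi (fun j => Set.Icc 0 (x j)) with hCdef
  set D : Fin d → Set (Fin d → ℝ) := fun ℓ =>
    Set.univ.pi (fun j => if j = ℓ then Set.Ioc (x ℓ) 1 else Set.Icc 0 (x j)) with hDdef
  set T : Set (Fin d → ℝ) := {y : Fin d → ℝ |
      (∀ j, y j ∈ Set.Icc (0 : ℝ) 1) ∧ KDominates (d - 1) y x} with hTdef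
  set N : Set (Fin d → ℝ) := ⋃ ℓ : Fin d, {y | ∀ j, j ≠ ℓ → y j = x j} with hNdef
  set E : Set (Fin d → ℝ) := C ∪ ⋃ ℓ, D ℓ with hEdef
  -- T ⊆ E
  have hTE : T ⊆ E := by
    rintro y ⟨hbox, S, hScard, hSle, j₀, hj₀S, hlt⟩
    by_cases hSu : ∀ j, j ∈ S
    · left
      intro j _
      exact ⟨(hbox j).1, hSle j (hSu j)⟩
    · push_neg at hSu
      obtain ⟨ℓ, hℓ⟩ := hSu
      have hSsub : S ⊆ Finset.univ.erase ℓ := fun j hj =>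
        Finset.mem_erase.2 ⟨fun h => hℓ (h ▸ hj), Finset.mem_univ j⟩
      have hcard : (Finset.univ.erase ℓ).card = d - 1 := by
        rw [Finset.card_erase_of_mem (Finset.mem_univ ℓ), Finset.card_univ, Fintype.card_fin]
      have hSeq : S = Finset.univ.erase ℓ :=
        Finset.eq_of_subset_of_card_le hSsub (by omega)
      have hle : ∀ j, j ≠ ℓ → y j ≤ x j := fun j hj =>
        hSle j (hSeq ▸ Finset.mem_erase.2 ⟨hj, Finset.mem_univ j⟩)
      by_cases hyl : y ℓ ≤ x ℓ
      · left
        intro j _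
        rcases eq_or_ne j ℓ with rfl | hj
        · exact ⟨(hbox j).1, hyl⟩
        · exact ⟨(hbox j).1, hle j hj⟩
      · right
        refine Set.mem_iUnion.2 ⟨ℓ, fun j _ => ?_⟩
        rcases eq_or_ne j ℓ with rfl | hj
        · simp only [if_pos rfl]
          exact ⟨lt_of_not_ge hyl, (hbox j).2⟩
        · simp only [if_neg hj]
          exact ⟨(hbox j).1, hle j hj⟩
  -- E ⊆ T ∪ N
  have hET : E ⊆ T ∪ N := by
    rintro y (hyC | hyD)
    · -- y ∈ C
      have hle : ∀ j, y j ≤ x j := fun j => (hyC j (Set.mem_univ j)).2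
      have hbox : ∀ j, y j ∈ Set.Icc (0 : ℝ) 1 := fun j =>
        ⟨(hyC j (Set.mem_univ j)).1, (hle j).trans (hx1 j)⟩
      by_cases hstr : ∃ j, y j < x j
      · obtain ⟨j, hj⟩ := hstr
        refine Or.inl ⟨hbox, Finset.univ, ?_, fun j _ => hle j, j, Finset.mem_univ j, hj⟩
        rw [Finset.card_univ, Fintype.card_fin]; omega
      · push_neg at hstr
        have : ∀ j, y j = x j := fun j => le_antisymm (hle j) (hstr j)
        exact Or.inr (Set.mem_iUnion.2 ⟨⟨0, hd0⟩, fun j _ => this j⟩)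
    · obtain ⟨ℓ, hyℓ⟩ := Set.mem_iUnion.1 hyD
      have hmem : ∀ j, y j ∈ (if j = ℓ then Set.Ioc (x ℓ) 1 else Set.Icc 0 (x j)) :=
        fun j => hyℓ j (Set.mem_univ j)
      have hℓmem : y ℓ ∈ Set.Ioc (x ℓ) 1 := by simpa using hmem ℓ
      have hle : ∀ j, j ≠ ℓ → y j ≤ x j := by
        intro j hj; have := hmem j; rw [if_neg hj] at this; exact this.2
      have h0 : ∀ j, j ≠ ℓ → 0 ≤ y j := by
        intro j hj; have := hmem j; rw [if_neg hj] at this; exact this.1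
      have hbox : ∀ j, y j ∈ Set.Icc (0 : ℝ) 1 := by
        intro j
        rcases eq_or_ne j ℓ with rfl | hj
        · exact ⟨(hx0 j).trans hℓmem.1.le, hℓmem.2⟩
        · exact ⟨h0 j hj, (hle j hj).trans (hx1 j)⟩
      by_cases hstr : ∃ j, j ≠ ℓ ∧ y j < x j
      · obtain ⟨j, hjℓ, hj⟩ := hstr
        refine Or.inl ⟨hbox, Finset.univ.erase ℓ, ?_,
          fun k hk => hle k (Finset.mem_erase.1 hk).1,
          j, Finset.mem_erase.2 ⟨hjℓ, Finset.mem_univ j⟩, hj⟩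
        rw [Finset.card_erase_of_mem (Finset.mem_univ ℓ), Finset.card_univ, Fintype.card_fin]
      · push_neg at hstr
        exact Or.inr (Set.mem_iUnion.2
          ⟨ℓ, fun j hj => le_antisymm (hle j hj) (hstr j hj)⟩)
  -- N is null
  have hN : volume N = 0 := by
    rw [hNdef]
    refine measure_iUnion_null fun ℓ => ?_
    obtain ⟨j₀, hj₀⟩ := Fintype.exists_ne_of_one_lt_card (by simp; omega) ℓ
    have hsub : {y : Fin d → ℝ | ∀ j, j ≠ ℓ → y j = x j} ⊆ {y | y j₀ = x j₀} :=
      fun y hy => hy j₀ hj₀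
    refine measure_mono_null hsub ?_
    rw [volume_pi]
    exact Measure.pi_hyperplane (fun _ : Fin d => (volume : Measure ℝ)) j₀ (x j₀)
  -- volume T = volume E
  have hTeq : volume T = volume E := by
    refine le_antisymm (measure_mono hTE) ?_
    calc volume E ≤ volume (T ∪ N) := measure_mono hET
      _ ≤ volume T + volume N := measure_union_le T N
      _ = volume T := by rw [hN, add_zero]
  -- measurability
  have hCmeas : MeasurableSet C := MeasurableSet.univ_pi fun j => measurableSet_Icc
  have hDmeas : ∀ ℓ, MeasurableSet (D ℓ) := fun ℓ =>
    MeasurableSet.univ_pi fun j => by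
      by_cases h : j = ℓ
      · simp only [if_pos h]; exact measurableSet_Ioc
      · simp only [if_neg h]; exact measurableSet_Icc
  -- disjointness
  have hDdisj : Pairwise (Function.onFun Disjoint D) := by
    intro ℓ m hlm
    refine Set.disjoint_left.2 fun y hyℓ hym => ?_
    have h1 : y ℓ ∈ Set.Ioc (x ℓ) 1 := by simpa using hyℓ ℓ (Set.mem_univ ℓ)
    have h2 : y ℓ ∈ Set.Icc 0 (x ℓ) := by simpa [hlm] using hym ℓ (Set.mem_univ ℓ)
    exact absurd h2.2 (not_le.2 h1.1)
  have hCDdisj : Disjoint C (⋃ ℓ, D ℓ) := by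
    refine Set.disjoint_left.2 fun y hyC hyD => ?_
    obtain ⟨ℓ, hyℓ⟩ := Set.mem_iUnion.1 hyD
    have h1 : y ℓ ∈ Set.Ioc (x ℓ) 1 := by simpa using hyℓ ℓ (Set.mem_univ ℓ)
    exact absurd (hyC ℓ (Set.mem_univ ℓ)).2 (not_le.2 h1.1)
  -- compute volumes
  have hvolC : volume C = ENNReal.ofReal (∏ j : Fin d, x j) := by
    rw [hCdef, volume_pi_pi, ENNReal.ofReal_prod_of_nonneg (fun j _ => hx0 j)]
    simp [Real.volume_Icc]
  have hvolD : ∀ ℓ, volume (D ℓ) =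
      ENNReal.ofReal ((1 - x ℓ) * ∏ j ∈ Finset.univ.erase ℓ, x j) := by
    intro ℓ
    rw [hDdef]
    simp only
    rw [volume_pi_pi]
    rw [← Finset.mul_prod_erase Finset.univ _ (Finset.mem_univ ℓ)]
    have h1 : volume (if ℓ = ℓ then Set.Ioc (x ℓ) 1 else Set.Icc 0 (x ℓ)) =
        ENNReal.ofReal (1 - x ℓ) := by rw [if_pos rfl, Real.volume_Ioc]
    have h2 : ∏ j ∈ Finset.univ.erase ℓ,
        volume (if j = ℓ then Set.Ioc (x ℓ) 1 else Set.Icc 0 (x j)) =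
        ENNReal.ofReal (∏ j ∈ Finset.univ.erase ℓ, x j) := by
      rw [ENNReal.ofReal_prod_of_nonneg (fun j _ => hx0 j)]
      refine Finset.prod_congr rfl fun j hj => ?_
      rw [if_neg (Finset.mem_erase.1 hj).1, Real.volume_Icc, sub_zero]
    rw [h1, h2, ← ENNReal.ofReal_mul (by linarith [hx1 ℓ])]
  have hvolE : volume E = ENNReal.ofReal
      ((∏ j : Fin d, x j) + ∑ ℓ : Fin d, (1 - x ℓ) * ∏ j ∈ Finset.univ.erase ℓ, x j) := by
    rw [hEdef, measure_union hCDdisj (MeasurableSet.iUnion hDmeas),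
      measure_iUnion hDdisj hDmeas, tsum_fintype]
    rw [hvolC]
    rw [ENNReal.ofReal_add (Finset.prod_nonneg fun j _ => hx0 j)
      (Finset.sum_nonneg fun ℓ _ => mul_nonneg (by linarith [hx1 ℓ])
        (Finset.prod_nonneg fun j _ => hx0 j))]
    rw [ENNReal.ofReal_sum_of_nonneg fun ℓ _ => mul_nonneg (by linarith [hx1 ℓ])
      (Finset.prod_nonneg fun j _ => hx0 j)]
    exact congrArg _ (Finset.sum_congr rfl fun ℓ _ => hvolD ℓ)
  rw [hTeq, hvolE]
  congr 1
  have key : ∀ ℓ : Fin d, x ℓ * ∏ j ∈ Finset.univ.erase ℓ, x j = ∏ j : Fin d, x j :=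
    fun ℓ => Finset.mul_prod_erase Finset.univ x (Finset.mem_univ ℓ)
  have hsum : ∑ ℓ : Fin d, (1 - x ℓ) * ∏ j ∈ Finset.univ.erase ℓ, x j =
      (∑ ℓ : Fin d, ∏ j ∈ Finset.univ.erase ℓ, x j) - d * ∏ j : Fin d, x j := by
    have hterm : ∀ ℓ : Fin d, (1 - x ℓ) * ∏ j ∈ Finset.univ.erase ℓ, x j =
        (∏ j ∈ Finset.univ.erase ℓ, x j) - ∏ j : Fin d, x j := by
      intro ℓ; rw [sub_mul, one_mul, key ℓ]
    rw [Finset.sum_congr rfl fun ℓ _ => hterm ℓ, Finset.sum_sub_distrib,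
      Finset.sum_const, Finset.card_univ, Fintype.card_fin, nsmul_eq_mul]
  rw [hsum]; ring
end

section
/- For d ≥ 2, the integral over the positive orthant ℝ_+^d of exp(−y_1⋯y_d · (1/y_1 + ⋯ + 1/y_d)) dy equals Γ(1/(d−1))^d / (d−1). -/
open MeasureTheory Finset

noncomputable def phiMap (d : ℕ) : (Fin d → ℝ) → (Fin d → ℝ) :=
  fun y j => ∏ ℓ ∈ Finset.univ.erase j, y ℓ

noncomputable def phiDeriv (d : ℕ) (y : Fin d → ℝ) : (Fin d → ℝ) →L[ℝ] (Fin d → ℝ) :=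
  ContinuousLinearMap.pi fun j => ∑ i ∈ Finset.univ.erase j,
    (∏ ℓ ∈ (Finset.univ.erase j).erase i, y ℓ) • ContinuousLinearMap.proj i

theorem phiMap_hasFDerivAt (d : ℕ) (y : Fin d → ℝ) :
    HasFDerivAt (phiMap d) (phiDeriv d y) y := by
  apply hasFDerivAt_pi.2
  intro j
  exact HasFDerivAt.finset_prod (fun i _ => hasFDerivAt_apply i y)

theorem prod_erase_erase {d : ℕ} (y : Fin d → ℝ) (hy : ∀ k, y k ≠ 0) {i j : Fin d}
    (hij : i ≠ j) :
    ∏ ℓ ∈ (Finset.univ.erase i).erase j, y ℓ = (∏ ℓ, y ℓ) * (y i)⁻¹ * (y j)⁻¹ := by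
  have h1 : y i * ∏ ℓ ∈ Finset.univ.erase i, y ℓ = ∏ ℓ, y ℓ :=
    Finset.mul_prod_erase _ _ (Finset.mem_univ i)
  have h2 : y j * ∏ ℓ ∈ (Finset.univ.erase i).erase j, y ℓ = ∏ ℓ ∈ Finset.univ.erase i, y ℓ :=
    Finset.mul_prod_erase _ _ (by simp [Finset.mem_erase, hij.symm])
  rw [← h1, ← h2]
  field_simp [hy i, hy j]

theorem det_J_sub_one (d : ℕ) :
    (Matrix.of (fun _ _ : Fin d => (1:ℝ)) - 1).det = (-1)^d * (1 - (d:ℝ)) := by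
  have h : (Matrix.of (fun _ _ : Fin d => (1:ℝ)) - 1) =
      -(1 + Matrix.replicateCol Unit (fun _ => (-1:ℝ)) * Matrix.replicateRow Unit (fun _ => (1:ℝ))) := by
    ext i j
    by_cases h : i = j <;>
      simp [Matrix.mul_apply, Matrix.one_apply, h]
  rw [h, Matrix.det_neg, Matrix.det_one_add_replicateCol_mul_replicateRow]
  simp [dotProduct]
  ring

theorem phiDeriv_det {d : ℕ} (hd : 2 ≤ d) (y : Fin d → ℝ) (hy : ∀ k, y k ≠ 0) :
    (phiDeriv d y).det = (-1)^d * (1 - (d:ℝ)) * (∏ ℓ, y ℓ)^(d-2) := by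
  set P : ℝ := ∏ ℓ, y ℓ with hP
  have hP0 : P ≠ 0 := Finset.prod_ne_zero_iff.2 fun k _ => hy k
  have hM : LinearMap.toMatrix' ((phiDeriv d y : (Fin d → ℝ) →ₗ[ℝ] (Fin d → ℝ))) =
      Matrix.diagonal (fun i => P * (y i)⁻¹) *
        ((Matrix.of (fun _ _ : Fin d => (1:ℝ)) - 1) * Matrix.diagonal (fun j => (y j)⁻¹)) := by
    ext i j
    rw [LinearMap.toMatrix'_apply]
    simp only [ContinuousLinearMap.coe_coe, phiDeriv, ContinuousLinearMap.pi_apply,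
      ContinuousLinearMap.sum_apply, ContinuousLinearMap.smul_apply,
      ContinuousLinearMap.proj_apply, smul_eq_mul, mul_ite, mul_one, mul_zero,
      Finset.sum_ite_eq', Finset.mem_erase, Finset.mem_univ, and_true,
      Matrix.mul_diagonal, Matrix.diagonal_mul, Matrix.sub_apply, Matrix.of_apply,
      Matrix.one_apply, Pi.single_apply]
    by_cases h : i = j
    · simp [h]
    · rw [if_pos (Ne.symm h), prod_erase_erase y hy h, if_neg h]
      ring
  have hdet : (phiDeriv d y).det = (LinearMap.toMatrix'
      ((phiDeriv d y : (Fin d → ℝ) →ₗ[ℝ] (Fin d → ℝ)))).det := by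
    rw [LinearMap.det_toMatrix']
  rw [hdet, hM, Matrix.det_mul, Matrix.det_mul, Matrix.det_diagonal, det_J_sub_one,
    Matrix.det_diagonal]
  rw [Finset.prod_mul_distrib, Finset.prod_const, Finset.prod_inv_distrib, ← hP,
    Finset.card_univ, Fintype.card_fin, pow_sub₀ P hP0 (by omega : 2 ≤ d)]
  field_simp

theorem phiMap_apply_eq {d : ℕ} (y : Fin d → ℝ) (hy : ∀ k, y k ≠ 0) (j : Fin d) :
    phiMap d y j = (∏ ℓ, y ℓ) * (y j)⁻¹ := by
  have h1 : y j * ∏ ℓ ∈ Finset.univ.erase j, y ℓ = ∏ ℓ, y ℓ :=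
    Finset.mul_prod_erase _ _ (Finset.mem_univ j)
  rw [phiMap, ← h1]
  field_simp [hy j]

theorem phiMap_prod {d : ℕ} (hd : 2 ≤ d) (y : Fin d → ℝ) (hy : ∀ k, y k ≠ 0) :
    ∏ j, phiMap d y j = (∏ ℓ, y ℓ)^(d-1) := by
  have hP0 : (∏ ℓ, y ℓ) ≠ 0 := Finset.prod_ne_zero_iff.2 fun k _ => hy k
  calc ∏ j, phiMap d y j = ∏ j, ((∏ ℓ, y ℓ) * (y j)⁻¹) := by
        exact Finset.prod_congr rfl fun j _ => phiMap_apply_eq y hy j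
    _ = (∏ ℓ, y ℓ)^d * (∏ ℓ, y ℓ)⁻¹ := by
        rw [Finset.prod_mul_distrib, Finset.prod_const, Finset.prod_inv_distrib,
          Finset.card_univ, Fintype.card_fin]
    _ = (∏ ℓ, y ℓ)^(d-1) := by
        rw [pow_sub₀ _ hP0 (by omega : 1 ≤ d), pow_one]

theorem phiMap_injOn (d : ℕ) (hd : 2 ≤ d) :
    Set.InjOn (phiMap d) (Set.univ.pi fun _ : Fin d => Set.Ioi (0:ℝ)) := by
  intro y hy y' hy' h
  have hyp : ∀ k, 0 < y k := fun k => hy k (Set.mem_univ k)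
  have hyp' : ∀ k, 0 < y' k := fun k => hy' k (Set.mem_univ k)
  have hP : 0 < ∏ ℓ, y ℓ := Finset.prod_pos fun k _ => hyp k
  have hP' : 0 < ∏ ℓ, y' ℓ := Finset.prod_pos fun k _ => hyp' k
  have hprod : (∏ ℓ, y ℓ)^(d-1) = (∏ ℓ, y' ℓ)^(d-1) := by
    rw [← phiMap_prod hd y (fun k => (hyp k).ne'), ← phiMap_prod hd y' (fun k => (hyp' k).ne'), h]
  have hPP : (∏ ℓ, y ℓ) = (∏ ℓ, y' ℓ) :=
    (pow_left_inj₀ hP.le hP'.le (by omega : d - 1 ≠ 0)).1 hprod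
  funext j
  have e1 := phiMap_apply_eq y (fun k => (hyp k).ne') j
  have e2 := phiMap_apply_eq y' (fun k => (hyp' k).ne') j
  have : (∏ ℓ, y ℓ) * (y j)⁻¹ = (∏ ℓ, y ℓ) * (y' j)⁻¹ := by
    rw [← e1, h, e2, hPP]
  have := mul_left_cancel₀ hP.ne' this
  exact inv_injective this |>.symm ▸ rfl

theorem phiMap_image (d : ℕ) (hd : 2 ≤ d) :
    phiMap d '' (Set.univ.pi fun _ : Fin d => Set.Ioi (0:ℝ)) =
      (Set.univ.pi fun _ : Fin d => Set.Ioi (0:ℝ)) := by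
  have hd1 : (0:ℝ) < (d:ℝ) - 1 := by
    have : (2:ℝ) ≤ (d:ℝ) := by exact_mod_cast hd
    linarith
  apply Set.Subset.antisymm
  · rintro _ ⟨y, hy, rfl⟩
    intro j _
    exact Finset.prod_pos (f := y) fun ℓ _ => hy ℓ (Set.mem_univ ℓ)
  · intro t ht
    have htp : ∀ k, 0 < t k := fun k => ht k (Set.mem_univ k)
    have hQ : 0 < ∏ ℓ, t ℓ := Finset.prod_pos fun k _ => htp k
    set c : ℝ := 1 / ((d:ℝ) - 1) with hc
    refine ⟨fun j => (∏ ℓ, t ℓ) ^ c * (t j)⁻¹, fun j _ => ?_, ?_⟩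
    · exact mul_pos (Real.rpow_pos_of_pos hQ c) (inv_pos.2 (htp j))
    · funext j
      have hy : ∀ k, ((∏ ℓ, t ℓ) ^ c * (t k)⁻¹ : ℝ) ≠ 0 :=
        fun k => (mul_pos (Real.rpow_pos_of_pos hQ c) (inv_pos.2 (htp k))).ne'
      rw [phiMap_apply_eq _ hy j]
      have hyprod : ∏ ℓ, ((∏ ℓ', t ℓ') ^ c * (t ℓ)⁻¹ : ℝ) =
          ((∏ ℓ, t ℓ) ^ c)^d * (∏ ℓ, t ℓ)⁻¹ := by
        rw [Finset.prod_mul_distrib, Finset.prod_const, Finset.prod_inv_distrib,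
          Finset.card_univ, Fintype.card_fin]
      rw [hyprod]
      have hpow : (((∏ ℓ, t ℓ) ^ c : ℝ))^d = (∏ ℓ, t ℓ) ^ (c * d) := by
        rw [Real.rpow_mul hQ.le, Real.rpow_natCast]
      rw [hpow, mul_inv, inv_inv]
      have hsplit : ((∏ ℓ, t ℓ) : ℝ) ^ (c * d) = (∏ ℓ, t ℓ) ^ c * (∏ ℓ, t ℓ) := by
        have : c * (d:ℝ) = c + 1 := by
          have h' : c * ((d:ℝ) - 1) = 1 := by rw [hc]; exact one_div_mul_cancel hd1.ne'
          linarith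
        rw [this, Real.rpow_add hQ, Real.rpow_one]
      rw [hsplit]
      field_simp [(Real.rpow_pos_of_pos hQ c).ne', hQ.ne', (htp j).ne']

/-- `∫_{ℝ_+^d} exp(−y_1⋯y_d (1/y_1 + ⋯ + 1/y_d)) dy = Γ(1/(d−1))^d/(d−1)`. -/
theorem integral_phi_d (d : ℕ) (hd : 2 ≤ d) :
    ∫ y in (Set.univ.pi fun _ : Fin d => Set.Ioi (0 : ℝ)),
        Real.exp (-(∑ j : Fin d, ∏ ℓ ∈ Finset.univ.erase j, y ℓ)) =
      Real.Gamma (1 / ((d : ℝ) - 1)) ^ d / ((d : ℝ) - 1) := by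
  have hd1 : (0:ℝ) < (d:ℝ) - 1 := by
    have : (2:ℝ) ≤ (d:ℝ) := by exact_mod_cast hd
    linarith
  set c : ℝ := 1 / ((d:ℝ) - 1) with hc
  have hc0 : 0 < c := by positivity
  have hcd : ((d:ℝ) - 1) * c = 1 := by
    rw [hc]; exact mul_one_div_cancel hd1.ne'
  set s : Set (Fin d → ℝ) := Set.univ.pi fun _ : Fin d => Set.Ioi (0:ℝ) with hs
  have hsm : MeasurableSet s := MeasurableSet.univ_pi fun _ => measurableSet_Ioi
  set h1d : ℝ → ℝ := fun x => Real.exp (-x) * x ^ (c - 1) with hh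
  set g : (Fin d → ℝ) → ℝ := fun t => ((d:ℝ) - 1)⁻¹ * ∏ j, h1d (t j) with hg
  have key : ∀ y ∈ s, |(phiDeriv d y).det| • g (phiMap d y) =
      Real.exp (-(∑ j, phiMap d y j)) := by
    intro y hy
    have hyp : ∀ k, 0 < y k := fun k => hy k (Set.mem_univ k)
    have hyne : ∀ k, y k ≠ 0 := fun k => (hyp k).ne'
    have hP : 0 < ∏ ℓ, y ℓ := Finset.prod_pos fun k _ => hyp k
    have hΦpos : ∀ j, 0 < phiMap d y j := fun j => Finset.prod_pos fun ℓ _ => hyp ℓ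
    have hdet : |(phiDeriv d y).det| = ((d:ℝ) - 1) * (∏ ℓ, y ℓ)^(d-2) := by
      rw [phiDeriv_det hd y hyne, abs_mul, abs_mul, abs_pow, abs_neg, abs_one, one_pow,
        one_mul, abs_of_nonneg (pow_nonneg hP.le _),
        abs_of_nonpos (by linarith : (1:ℝ) - (d:ℝ) ≤ 0)]
      ring
    have hprodexp : ∏ j, h1d (phiMap d y j) =
        Real.exp (-(∑ j, phiMap d y j)) * ((∏ ℓ, y ℓ)^(d-1) : ℝ) ^ (c-1) := by
      rw [hh]
      rw [Finset.prod_mul_distrib, ← Real.exp_sum,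
        Real.finset_prod_rpow _ _ (fun j _ => (hΦpos j).le), phiMap_prod hd y hyne]
      congr 1
      congr 1
      simp
    have e1 : (((∏ ℓ, y ℓ)^(d-1) : ℝ)) ^ (c-1) = (∏ ℓ, y ℓ) ^ ((2:ℝ) - (d:ℝ)) := by
      rw [← Real.rpow_natCast (∏ ℓ, y ℓ) (d-1), ← Real.rpow_mul hP.le]
      congr 1
      have : ((d - 1 : ℕ) : ℝ) = (d:ℝ) - 1 := by
        have := Nat.cast_sub (by omega : 1 ≤ d) (R := ℝ)
        simpa using this
      rw [this, mul_sub, hcd, mul_one]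
      ring
    have e2 : ((∏ ℓ, y ℓ)^(d-2) : ℝ) = (∏ ℓ, y ℓ) ^ ((d:ℝ) - 2) := by
      rw [← Real.rpow_natCast (∏ ℓ, y ℓ) (d-2)]
      congr 1
      have := Nat.cast_sub (by omega : 2 ≤ d) (R := ℝ)
      simpa using this
    have e3 : (∏ ℓ, y ℓ) ^ ((d:ℝ) - 2) * (∏ ℓ, y ℓ) ^ ((2:ℝ) - (d:ℝ)) = 1 := by
      rw [← Real.rpow_add hP]
      norm_num
    rw [smul_eq_mul, hdet, hg]
    simp only []
    rw [hprodexp, e1, e2]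
    field_simp [hd1.ne']
    linear_combination e3
  have hCoV := integral_image_eq_integral_abs_det_fderiv_smul volume hsm
      (fun y _ => (phiMap_hasFDerivAt d y).hasFDerivWithinAt) (phiMap_injOn d hd) g
  rw [phiMap_image d hd] at hCoV
  have step1 : (∫ y in s, Real.exp (-(∑ j : Fin d, ∏ ℓ ∈ Finset.univ.erase j, y ℓ)))
      = ∫ x in s, g x := by
    rw [hCoV]
    apply setIntegral_congr_fun hsm
    intro y hy
    exact (key y hy).symm
  have hgamma : ∫ x in Set.Ioi (0:ℝ), h1d x = Real.Gamma c :=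
    (Real.Gamma_eq_integral hc0).symm
  have step2 : ∫ x in s, g x = Real.Gamma c ^ d / ((d:ℝ) - 1) := by
    calc ∫ x in s, g x = ((d:ℝ)-1)⁻¹ * ∫ x in s, ∏ j, h1d (x j) := by
          rw [hg]
          exact integral_const_mul _ _
      _ = ((d:ℝ)-1)⁻¹ * ∫ x : Fin d → ℝ, ∏ j, (Set.Ioi (0:ℝ)).indicator h1d (x j) := by
          rw [← integral_indicator hsm]
          congr 1
          refine integral_congr_ae (Filter.Eventually.of_forall fun x => ?_)
          by_cases hx : x ∈ s
          · rw [Set.indicator_of_mem hx]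
            exact Finset.prod_congr rfl fun j _ =>
              (Set.indicator_of_mem (hx j (Set.mem_univ j)) _).symm
          · rw [Set.indicator_of_notMem hx]
            obtain ⟨j, hj⟩ : ∃ j, x j ∉ Set.Ioi (0:ℝ) := by
              by_contra hall
              push_neg at hall
              exact hx fun j _ => hall j
            exact (Finset.prod_eq_zero (Finset.mem_univ j)
              (Set.indicator_of_notMem hj _)).symm
      _ = ((d:ℝ)-1)⁻¹ * (∫ x : ℝ, (Set.Ioi (0:ℝ)).indicator h1d x) ^ d := by
          rw [MeasureTheory.volume_pi, MeasureTheory.integral_fintype_prod_eq_pow (ι := Fin d)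
            ((Set.Ioi (0:ℝ)).indicator h1d), Fintype.card_fin]
      _ = ((d:ℝ)-1)⁻¹ * Real.Gamma c ^ d := by
          rw [integral_indicator measurableSet_Ioi, hgamma]
      _ = Real.Gamma c ^ d / ((d:ℝ) - 1) := by
          rw [mul_comm, ← div_eq_mul_inv]
  rw [step1, step2]
end

section
/- For d ≥ 2 and every integer j ≥ 0, ∫_{ℝ_+^d} (t_1+⋯+t_d)^j exp(−(t_1+⋯+t_d)) (t_1⋯t_d)^{−(d−2)/(d−1)} dt = j! · Γ(1/(d−1))^d · binom(1/(d−1)+j, j). -/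
open MeasureTheory Finset

noncomputable def asc (x : ℝ) (n : ℕ) : ℝ := ∏ i ∈ Finset.range n, (x + i)
lemma asc_zero (x : ℝ) : asc x 0 = 1 := by simp [asc]
lemma asc_succ (x : ℝ) (n : ℕ) : asc x (n+1) = asc x n * (x + n) := by
  simp [asc, Finset.prod_range_succ]

lemma vand_range (j : ℕ) (x y : ℝ) :
    ∑ k ∈ Finset.range (j+1), (j.choose k : ℝ) * asc x k * asc y (j - k) = asc (x+y) j := by
  induction j with
  | zero => simp [asc]
  | succ j ih =>
    have hA : ∀ k ∈ Finset.range (j+1),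
        (j.choose k : ℝ) * asc x k * asc y (j - k) * ((x + k) + (y + ((j - k : ℕ) : ℝ)))
          = (j.choose k : ℝ) * asc x (k+1) * asc y (j - k)
            + (j.choose k : ℝ) * asc x k * asc y (j - k + 1) := by
      intro k hk
      rw [asc_succ, asc_succ]
      ring
    have hcast : ∀ k ∈ Finset.range (j+1),
        (j.choose k : ℝ) * asc x k * asc y (j - k) * (x + y + j)
          = (j.choose k : ℝ) * asc x k * asc y (j - k) * ((x + k) + (y + ((j - k : ℕ) : ℝ))) := by
      intro k hk
      rw [Finset.mem_range] at hk
      have : ((j - k : ℕ) : ℝ) = (j : ℝ) - k := by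
        rw [Nat.cast_sub (Nat.lt_succ_iff.mp hk)]
      rw [this]; ring
    have hRHS : asc (x+y) (j+1)
        = ∑ k ∈ Finset.range (j+1), ((j.choose k : ℝ) * asc x (k+1) * asc y (j - k)
            + (j.choose k : ℝ) * asc x k * asc y (j - k + 1)) := by
      rw [asc_succ, ← ih, Finset.sum_mul]
      rw [Finset.sum_congr rfl hcast, Finset.sum_congr rfl hA]
    rw [hRHS, Finset.sum_add_distrib]
    -- LHS: peel first term
    rw [Finset.sum_range_succ' (fun k => ((j+1).choose k : ℝ) * asc x k * asc y (j + 1 - k)) (j+1)]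
    have hsplit : ∀ k ∈ Finset.range (j+1),
        (((j+1).choose (k+1) : ℝ)) * asc x (k+1) * asc y (j + 1 - (k+1))
          = (j.choose k : ℝ) * asc x (k+1) * asc y (j - k)
            + (j.choose (k+1) : ℝ) * asc x (k+1) * asc y (j - k) := by
      intro k hk
      rw [Nat.choose_succ_succ, Nat.cast_add]
      have : j + 1 - (k + 1) = j - k := by omega
      rw [this]; ring
    rw [Finset.sum_congr rfl hsplit, Finset.sum_add_distrib]
    -- second piece + first term equals B
    have hB : ∑ k ∈ Finset.range (j+1), (j.choose k : ℝ) * asc x k * asc y (j - k + 1)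
        = ∑ k ∈ Finset.range (j+1), (j.choose (k+1) : ℝ) * asc x (k+1) * asc y (j - k)
          + ((j+1).choose 0 : ℝ) * asc x 0 * asc y (j + 1 - 0) := by
      rw [Finset.sum_range_succ' (fun k => (j.choose k : ℝ) * asc x k * asc y (j - k + 1)) j]
      rw [Finset.sum_range_succ (fun k => (j.choose (k+1) : ℝ) * asc x (k+1) * asc y (j - k))]
      simp only [Nat.choose_succ_self, Nat.cast_zero, zero_mul, add_zero, mul_zero]
      congr 1
      · apply Finset.sum_congr rfl
        intro k hk
        rw [Finset.mem_range] at hk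
        have : j - (k+1) + 1 = j - k := by omega
        rw [this]
      · simp [asc_zero, Nat.sub_zero]
    rw [hB]
    ring

lemma asc_zero_left {n : ℕ} (hn : n ≠ 0) : asc 0 n = 0 :=
  Finset.prod_eq_zero (Finset.mem_range.mpr (Nat.pos_of_ne_zero hn)) (by simp)


lemma vand_antidiag (j : ℕ) (x y : ℝ) :
    ∑ p ∈ Finset.HasAntidiagonal.antidiagonal j, (j.choose p.1 : ℝ) * asc x p.1 * asc y p.2 = asc (x+y) j := by
  rw [Finset.Nat.sum_antidiagonal_eq_sum_range_succ_mk]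
  exact vand_range j x y

lemma vand_multi {ι : Type*} [DecidableEq ι] (s : Finset ι) (x : ι → ℝ) (j : ℕ) :
    ∑ k ∈ Finset.piAntidiag s j, (Nat.multinomial s k : ℝ) * ∏ i ∈ s, asc (x i) (k i)
      = asc (∑ i ∈ s, x i) j := by
  induction s using Finset.cons_induction generalizing j with
  | empty =>
    rcases Nat.eq_zero_or_pos j with h | h
    · subst h; simp [asc]
    · rw [Finset.piAntidiag_empty_of_ne_zero h.ne']
      simp [asc_zero_left h.ne']
  | cons a s ha ih =>
    rw [Finset.piAntidiag_cons ha, Finset.sum_disjiUnion]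
    rw [Finset.sum_cons, ← vand_antidiag j (x a) (∑ i ∈ s, x i)]
    apply Finset.sum_congr rfl
    intro p hp
    rw [Finset.HasAntidiagonal.mem_antidiagonal] at hp
    rw [Finset.sum_map, ← ih p.2, Finset.mul_sum]
    apply Finset.sum_congr rfl
    intro k hk
    rw [Finset.mem_piAntidiag] at hk
    have hka : k a = 0 := by
      by_contra h; exact ha (hk.2 a h)
    have hemb : ∀ t, (addRightEmbedding fun t => if t = a then p.1 else 0) k t
        = k t + (if t = a then p.1 else 0) := by intro t; rfl
    set k' : ι → ℕ := fun t => k t + (if t = a then p.1 else 0) with hk'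
    have hk'eq : (addRightEmbedding fun t => if t = a then p.1 else 0) k = k' := by
      funext t; exact hemb t
    rw [hk'eq]
    have h1 : k' a = p.1 := by simp [hk', hka]
    have h2 : ∀ i ∈ s, k' i = k i := by
      intro i hi
      have : i ≠ a := fun h => ha (h ▸ hi)
      simp [hk', this]
    have hmult : Nat.multinomial (Finset.cons a s ha) k' = j.choose p.1 * Nat.multinomial s k := by
      rw [Nat.multinomial_cons, h1]
      have : ∑ i ∈ s, k' i = p.2 := by
        rw [Finset.sum_congr rfl h2, hk.1]
      rw [this, hp]
      rw [Nat.multinomial_congr h2]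
    rw [Finset.prod_cons, hmult, h1]
    rw [Finset.prod_congr rfl (fun i hi => by rw [h2 i hi])]
    push_cast
    ring


noncomputable def oneD (a : ℝ) (k : ℕ) : ℝ → ℝ :=
  fun x => x ^ k * Real.exp (-x) * x ^ (a - 1)

lemma oneD_eqOn (a : ℝ) (k : ℕ) :
    Set.EqOn (oneD a k) (fun x => Real.exp (-x) * x ^ (a + k - 1)) (Set.Ioi 0) := by
  intro x hx
  have hx0 : (0:ℝ) < x := hx
  simp only [oneD]
  rw [show a + (k:ℝ) - 1 = (k:ℝ) + (a - 1) by ring, Real.rpow_add hx0, Real.rpow_natCast]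
  ring

lemma oneD_integrableOn {a : ℝ} (ha : 0 < a) (k : ℕ) :
    IntegrableOn (oneD a k) (Set.Ioi 0) := by
  have h := Real.GammaIntegral_convergent (s := a + k) (by positivity)
  exact h.congr_fun (oneD_eqOn a k).symm measurableSet_Ioi |>.congr_fun (fun x hx => rfl) measurableSet_Ioi

lemma oneD_integral {a : ℝ} (ha : 0 < a) (k : ℕ) :
    ∫ x in Set.Ioi (0:ℝ), oneD a k x = Real.Gamma (a + k) := by
  rw [setIntegral_congr_fun measurableSet_Ioi (oneD_eqOn a k)]
  rw [Real.Gamma_eq_integral (by positivity)]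

/-- For `d ≥ 2` and `j ≥ 0`,
`∫_{ℝ_+^d} (∑ t_i)^j e^{−∑ t_i} (∏ t_i)^{−(d−2)/(d−1)} dt
  = j! Γ(1/(d−1))^d · binom(1/(d−1)+j, j)`,
where `binom(α,j) = (∏_{i<j} (α−i))/j!`. -/
theorem integral_moment (d j : ℕ) (hd : 2 ≤ d) :
    ∫ t in (Set.univ.pi fun _ : Fin d => Set.Ioi (0 : ℝ)),
        (∑ i : Fin d, t i) ^ j * Real.exp (-(∑ i : Fin d, t i)) *
          (∏ i : Fin d, t i) ^ (-((d : ℝ) - 2) / ((d : ℝ) - 1)) =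
      (j.factorial : ℝ) * Real.Gamma (1 / ((d : ℝ) - 1)) ^ d *
        ((∏ i ∈ Finset.range j, (1 / ((d : ℝ) - 1) + (j : ℝ) - (i : ℝ))) /
          (j.factorial : ℝ)) := by
  have hd2 : (2:ℝ) ≤ (d:ℝ) := by exact_mod_cast hd
  have hd1 : (0:ℝ) < (d:ℝ) - 1 := by linarith
  set a : ℝ := 1 / ((d:ℝ) - 1) with ha_def
  have ha : 0 < a := by positivity
  have hexp : -((d : ℝ) - 2) / ((d : ℝ) - 1) = a - 1 := by
    rw [ha_def]; field_simp; ring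
  set S := Set.univ.pi fun _ : Fin d => Set.Ioi (0 : ℝ) with hS_def
  have hSm : MeasurableSet S := MeasurableSet.univ_pi fun i => measurableSet_Ioi
  -- indicator factorization
  have hprod_ind : ∀ (k : Fin d → ℕ), Set.indicator S (fun t => ∏ i, oneD a (k i) (t i))
      = fun t => ∏ i, Set.indicator (Set.Ioi 0) (oneD a (k i)) (t i) := by
    intro k; funext t
    by_cases ht : t ∈ S
    · rw [Set.indicator_of_mem ht]
      exact Finset.prod_congr rfl fun i _ =>
        (Set.indicator_of_mem (ht i (Set.mem_univ i)) _).symm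
    · rw [Set.indicator_of_notMem ht]
      rw [hS_def, Set.mem_pi] at ht; push_neg at ht
      obtain ⟨i, _, hi⟩ := ht
      exact (Finset.prod_eq_zero (Finset.mem_univ i) (Set.indicator_of_notMem hi _)).symm
  have hIntOn : ∀ (k : Fin d → ℕ), IntegrableOn (fun t => ∏ i, oneD a (k i) (t i)) S := by
    intro k
    rw [← integrable_indicator_iff hSm, hprod_ind k]
    exact MeasureTheory.Integrable.fintype_prod
      (f := fun i => Set.indicator (Set.Ioi 0) (oneD a (k i))) fun i =>
      (integrable_indicator_iff measurableSet_Ioi).mpr (oneD_integrableOn ha _)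
  -- step 1: pointwise congruence on S
  have hcong : Set.EqOn
      (fun t : Fin d → ℝ => (∑ i : Fin d, t i) ^ j * Real.exp (-(∑ i : Fin d, t i)) *
          (∏ i : Fin d, t i) ^ (-((d : ℝ) - 2) / ((d : ℝ) - 1)))
      (fun t : Fin d → ℝ => ∑ k ∈ Finset.piAntidiag Finset.univ j,
          (Nat.multinomial Finset.univ k : ℝ) * ∏ i, oneD a (k i) (t i)) S := by
    intro t ht
    have hpos : ∀ i, 0 < t i := fun i => ht i (Set.mem_univ i)
    simp only
    rw [hexp]
    have hexpprod : Real.exp (-(∑ i : Fin d, t i)) = ∏ i, Real.exp (-(t i)) := by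
      rw [← Real.exp_sum, ← Finset.sum_neg_distrib]
    have hrpowprod : (∏ i : Fin d, t i) ^ (a - 1) = ∏ i, (t i) ^ (a - 1) := by
      exact (Real.finset_prod_rpow _ _ (fun i _ => (hpos i).le) _).symm
    rw [Finset.sum_pow_eq_sum_piAntidiag, Finset.sum_mul, Finset.sum_mul]
    apply Finset.sum_congr rfl
    intro k hk
    rw [mul_assoc, mul_assoc, hexpprod, hrpowprod, ← Finset.prod_mul_distrib,
      ← Finset.prod_mul_distrib]
    congr 1
    exact Finset.prod_congr rfl fun i _ => by simp only [oneD]; ring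
  rw [setIntegral_congr_fun hSm hcong]
  rw [integral_finset_sum _ fun k _ => ((hIntOn k).const_mul _)]
  have hfactor : ∀ (k : Fin d → ℕ),
      ∫ t in S, ∏ i, oneD a (k i) (t i) = ∏ i : Fin d, Real.Gamma (a + k i) := by
    intro k
    rw [← integral_indicator hSm, hprod_ind k, MeasureTheory.volume_pi]
    beta_reduce
    rw [MeasureTheory.integral_fintype_prod_eq_prod (ι := Fin d)
        (f := fun i => Set.indicator (Set.Ioi 0) (oneD a (k i)))]
    exact Finset.prod_congr rfl fun i _ => by
      rw [integral_indicator measurableSet_Ioi, oneD_integral ha]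
  have hGam : ∀ n : ℕ, Real.Gamma (a + n) = Real.Gamma a * asc a n := by
    intro n; induction n with
    | zero => simp [asc_zero]
    | succ n ih =>
      have h1 : a + ((n+1 : ℕ):ℝ) = (a + n) + 1 := by push_cast; ring
      rw [h1, Real.Gamma_add_one (by positivity), ih, asc_succ]; ring
  have hda : (d:ℝ) * a = a + 1 := by
    rw [ha_def]; field_simp; ring
  calc ∑ k ∈ Finset.piAntidiag Finset.univ j,
        ∫ t in S, (Nat.multinomial Finset.univ k : ℝ) * ∏ i, oneD a (k i) (t i)
      = ∑ k ∈ Finset.piAntidiag Finset.univ j,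
        (Nat.multinomial Finset.univ k : ℝ) * ∏ i : Fin d, Real.Gamma (a + k i) := by
        exact Finset.sum_congr rfl fun k _ => by rw [MeasureTheory.integral_const_mul, hfactor k]
    _ = Real.Gamma a ^ d * ∑ k ∈ Finset.piAntidiag Finset.univ j,
        (Nat.multinomial Finset.univ k : ℝ) * ∏ i : Fin d, asc a (k i) := by
        rw [Finset.mul_sum]
        apply Finset.sum_congr rfl
        intro k _
        rw [Finset.prod_congr rfl fun i (_ : i ∈ Finset.univ) => hGam (k i),
          Finset.prod_mul_distrib, Finset.prod_const, Finset.card_univ, Fintype.card_fin]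
        ring
    _ = Real.Gamma a ^ d * asc (a + 1) j := by
        rw [vand_multi Finset.univ (fun _ => a) j, Finset.sum_const, Finset.card_univ,
          Fintype.card_fin, nsmul_eq_mul, hda]
    _ = (j.factorial : ℝ) * Real.Gamma a ^ d *
        ((∏ i ∈ Finset.range j, (a + (j : ℝ) - (i : ℝ))) / (j.factorial : ℝ)) := by
        have hfac : (j.factorial : ℝ) ≠ 0 := by positivity
        have hprod : ∏ i ∈ Finset.range j, (a + (j:ℝ) - (i:ℝ)) = asc (a+1) j := by
          rw [asc, ← Finset.prod_range_reflect (fun i => (a+1) + (i:ℝ)) j]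
          apply Finset.prod_congr rfl
          intro i hi
          rw [Finset.mem_range] at hi
          have h1 : ((j - 1 - i : ℕ) : ℝ) = (j:ℝ) - 1 - i := by
            have : 1 + i ≤ j := by omega
            push_cast [Nat.sub_sub, Nat.cast_sub this]
            ring
          rw [h1]; ring
        rw [hprod]
        field_simp
end

section
/- For d ≥ 2 and λ > 0, ∫_{ℝ_+^d} exp(−λ · y_1⋯y_d · (1/y_1 + ⋯ + 1/y_d)) dy = (Γ(1/(d−1))^d / (d−1)) · λ^{−d/(d−1)}. -/
open MeasureTheory Finset

noncomputable def Tmap (d : ℕ) (y : Fin d → ℝ) : Fin d → ℝ :=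
  fun i => ∏ ℓ ∈ Finset.univ.erase i, y ℓ

noncomputable def Tderiv (d : ℕ) (y : Fin d → ℝ) : (Fin d → ℝ) →L[ℝ] (Fin d → ℝ) :=
  ContinuousLinearMap.pi fun i => ∑ j ∈ Finset.univ.erase i,
    (∏ ℓ ∈ (Finset.univ.erase i).erase j, y ℓ) • ContinuousLinearMap.proj j

theorem Tmap_hasFDerivAt (d : ℕ) (y : Fin d → ℝ) :
    HasFDerivAt (Tmap d) (Tderiv d y) y := by
  rw [hasFDerivAt_pi']
  intro i
  have h : ∀ j ∈ Finset.univ.erase i, HasFDerivAt (fun y : Fin d → ℝ => y j)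
      (ContinuousLinearMap.proj j : (Fin d → ℝ) →L[ℝ] ℝ) y := fun j _ => hasFDerivAt_apply j y
  have := HasFDerivAt.finset_prod h
  convert this using 1 <;> rfl

theorem Tderiv_det (d : ℕ) (hd : 2 ≤ d) (y : Fin d → ℝ) (hy : ∀ i, 0 < y i) :
    |(Tderiv d y).det| = ((d : ℝ) - 1) * (∏ i, y i) ^ (d - 2) := by
  classical
  set P : ℝ := ∏ i, y i with hP
  have hPpos : 0 < P := Finset.prod_pos fun i _ => hy i
  -- the matrix of the derivative
  have hmat : LinearMap.toMatrix' ((Tderiv d y) : (Fin d → ℝ) →ₗ[ℝ] (Fin d → ℝ)) =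
      Matrix.of (fun i j => if j = i then (0:ℝ) else ∏ ℓ ∈ (Finset.univ.erase i).erase j, y ℓ) := by
    ext i j
    rw [LinearMap.toMatrix'_apply]
    simp only [ContinuousLinearMap.coe_coe, Tderiv, ContinuousLinearMap.pi_apply,
      ContinuousLinearMap.sum_apply, ContinuousLinearMap.smul_apply,
      ContinuousLinearMap.proj_apply, Matrix.of_apply]
    by_cases h : j = i
    · subst h
      rw [if_pos rfl]
      apply Finset.sum_eq_zero
      intro k hk
      have : k ≠ j := (Finset.mem_erase.mp hk).1
      simp [this]
    · rw [if_neg h, Finset.sum_eq_single j]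
      · simp
      · intro b _ hbj; simp [hbj]
      · intro hj; exact absurd (Finset.mem_erase.mpr ⟨h, Finset.mem_univ j⟩) hj
  have hyne : ∀ i, y i ≠ 0 := fun i => (hy i).ne'
  set D : Matrix (Fin d) (Fin d) ℝ := Matrix.diagonal fun i => (y i)⁻¹ with hD
  set A : Matrix (Fin d) (Fin d) ℝ := Matrix.of fun i j => if j = i then (0:ℝ) else P with hA
  have hMDAD : (Matrix.of (fun i j => if j = i then (0:ℝ)
      else ∏ ℓ ∈ (Finset.univ.erase i).erase j, y ℓ)) = D * A * D := by
    ext i j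
    rw [hD, hA]
    rw [Matrix.mul_diagonal, Matrix.diagonal_mul]
    simp only [Matrix.of_apply]
    by_cases h : j = i
    · simp [h]
    · rw [if_neg h, if_neg h]
      have h1 : (∏ ℓ ∈ (Finset.univ.erase i).erase j, y ℓ) * y j = ∏ ℓ ∈ Finset.univ.erase i, y ℓ :=
        Finset.prod_erase_mul _ _ (Finset.mem_erase.mpr ⟨h, Finset.mem_univ j⟩)
      have h2 : (∏ ℓ ∈ Finset.univ.erase i, y ℓ) * y i = P :=
        Finset.prod_erase_mul _ _ (Finset.mem_univ i)
      rw [← h2, ← h1]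
      have hi := hyne i
      have hj := hyne j
      field_simp
  have hA2 : A = P • ((Matrix.of fun _ _ => (1:ℝ)) - 1) := by
    ext i j
    by_cases h : j = i
    · simp [hA, h, Matrix.one_apply]
    · simp [hA, h, Matrix.one_apply, Ne.symm h]
  have hJ : ((1 : Matrix (Fin d) (Fin d) ℝ) - Matrix.of fun _ _ => (1:ℝ)) =
      1 + Matrix.replicateCol Unit (fun _ => (1:ℝ)) * Matrix.replicateRow Unit (fun _ => (-1:ℝ)) := by
    ext i j
    simp [Matrix.mul_apply]
    ring
  have hdetJ : Matrix.det ((Matrix.of fun _ _ => (1:ℝ)) - (1 : Matrix (Fin d) (Fin d) ℝ)) =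
      (-1) ^ d * (1 - (d:ℝ)) := by
    have : ((Matrix.of fun _ _ => (1:ℝ)) - (1 : Matrix (Fin d) (Fin d) ℝ)) =
        -((1 : Matrix (Fin d) (Fin d) ℝ) - Matrix.of fun _ _ => (1:ℝ)) := (neg_sub _ _).symm
    rw [this, Matrix.det_neg, hJ, Matrix.det_one_add_replicateCol_mul_replicateRow]
    simp [dotProduct, Fintype.card_fin]
    ring
  have hdetA : A.det = P ^ d * ((-1) ^ d * (1 - (d:ℝ))) := by
    rw [hA2, Matrix.det_smul, hdetJ, Fintype.card_fin]
  have hdet : (Tderiv d y).det = P ^ (d - 2) * ((-1) ^ d * (1 - (d:ℝ))) := by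
    have := LinearMap.det_toMatrix' ((Tderiv d y) : (Fin d → ℝ) →ₗ[ℝ] (Fin d → ℝ))
    rw [ContinuousLinearMap.det, ← this, hmat, hMDAD, Matrix.det_mul, Matrix.det_mul,
      Matrix.det_diagonal, hdetA]
    rw [Finset.prod_inv_distrib, ← hP]
    have hPd : P ^ d = P ^ (d - 2) * P * P := by
      rw [← pow_succ, ← pow_succ]
      congr 1
      omega
    field_simp [hPd]
    rw [hPd]; ring
  rw [hdet, abs_mul, abs_mul, abs_pow, abs_pow, abs_neg, abs_one, one_pow, one_mul,
    abs_of_nonneg hPpos.le]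
  have : |1 - (d:ℝ)| = (d:ℝ) - 1 := by
    rw [abs_sub_comm, abs_of_nonneg]
    have : (2:ℝ) ≤ (d:ℝ) := by exact_mod_cast hd
    linarith
  rw [this]
  ring

theorem Tmap_mul_self (d : ℕ) (y : Fin d → ℝ) (i : Fin d) :
    Tmap d y i * y i = ∏ ℓ, y ℓ :=
  Finset.prod_erase_mul _ _ (Finset.mem_univ i)

theorem prod_Tmap (d : ℕ) (y : Fin d → ℝ) (hy : ∀ i, 0 < y i) :
    ∏ i, Tmap d y i = (∏ i, y i) ^ (d - 1) := by
  have hP : 0 < ∏ i, y i := Finset.prod_pos fun i _ => hy i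
  have h1 : (∏ i, Tmap d y i) * ∏ i, y i = (∏ i, y i) ^ d := by
    rw [← Finset.prod_mul_distrib]
    simp_rw [Tmap_mul_self]
    rw [Finset.prod_const, Finset.card_univ, Fintype.card_fin]
  rcases Nat.eq_zero_or_pos d with h | h
  · subst h; simp
  · have h2 : (∏ i, y i) ^ d = (∏ i, y i) ^ (d - 1) * (∏ i, y i) := by
      rw [← pow_succ]
      congr 1
      omega
    rw [h2] at h1
    exact mul_right_cancel₀ hP.ne' h1

theorem Tmap_injOn (d : ℕ) (hd : 2 ≤ d) :
    Set.InjOn (Tmap d) (Set.univ.pi fun _ : Fin d => Set.Ioi (0 : ℝ)) := by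
  intro y hy y' hy' h
  have hypos : ∀ i, 0 < y i := fun i => hy i (Set.mem_univ i)
  have hy'pos : ∀ i, 0 < y' i := fun i => hy' i (Set.mem_univ i)
  have hP : 0 < ∏ i, y i := Finset.prod_pos fun i _ => hypos i
  have hP' : 0 < ∏ i, y' i := Finset.prod_pos fun i _ => hy'pos i
  have hprod : (∏ i, y i) ^ (d - 1) = (∏ i, y' i) ^ (d - 1) := by
    rw [← prod_Tmap d y hypos, ← prod_Tmap d y' hy'pos, h]
  have hPP : (∏ i, y i) = ∏ i, y' i := by
    have := pow_left_strictMonoOn₀ (M₀ := ℝ) (n := d - 1) (by omega)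
    exact this.injOn hP.le hP'.le hprod
  funext i
  have h1 : Tmap d y i * y i = Tmap d y i * y' i := by
    rw [Tmap_mul_self, hPP, ← Tmap_mul_self d y' i, h]
  have hT0 : Tmap d y i ≠ 0 := (Finset.prod_pos fun ℓ _ => hypos ℓ).ne'
  exact mul_left_cancel₀ hT0 h1

theorem Tmap_image (d : ℕ) (hd : 2 ≤ d) :
    Tmap d '' (Set.univ.pi fun _ : Fin d => Set.Ioi (0 : ℝ)) =
      (Set.univ.pi fun _ : Fin d => Set.Ioi (0 : ℝ)) := by
  apply Set.Subset.antisymm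
  · rintro _ ⟨y, hy, rfl⟩
    intro i _
    exact Finset.prod_pos (s := Finset.univ.erase i) (f := y) fun ℓ _ => hy ℓ (Set.mem_univ ℓ)
  · intro u hu
    have hupos : ∀ i, 0 < u i := fun i => hu i (Set.mem_univ i)
    have hU : 0 < ∏ i, u i := Finset.prod_pos fun i _ => hupos i
    have hd1 : ((d : ℝ) - 1) ≠ 0 := by
      have : (2:ℝ) ≤ (d:ℝ) := by exact_mod_cast hd
      linarith
    set Q : ℝ := (∏ i, u i) ^ ((1:ℝ)/((d:ℝ)-1)) with hQ
    have hQpos : 0 < Q := Real.rpow_pos_of_pos hU _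
    have hQpow : Q ^ (d - 1) = ∏ i, u i := by
      rw [hQ, ← Real.rpow_natCast ((∏ i, u i) ^ ((1:ℝ)/((d:ℝ)-1))) (d-1), ← Real.rpow_mul hU.le]
      have : ((d - 1 : ℕ) : ℝ) = (d:ℝ) - 1 := by
        have : 1 ≤ d := by omega
        push_cast [this]
        ring
      rw [this, one_div, inv_mul_cancel₀ hd1, Real.rpow_one]
    refine ⟨fun i => Q / u i, fun i _ => div_pos hQpos (hupos i), ?_⟩
    funext i
    show ∏ ℓ ∈ Finset.univ.erase i, (Q / u ℓ) = u i
    rw [Finset.prod_div_distrib, Finset.prod_const]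
    have hcard : (Finset.univ.erase i).card = d - 1 := by
      rw [Finset.card_erase_of_mem (Finset.mem_univ i), Finset.card_univ, Fintype.card_fin]
    have herase : (∏ ℓ ∈ Finset.univ.erase i, u ℓ) * u i = ∏ ℓ, u ℓ :=
      Finset.prod_erase_mul _ _ (Finset.mem_univ i)
    rw [hcard, hQpow]
    have hprodpos : 0 < ∏ x ∈ Finset.univ.erase i, u x :=
      Finset.prod_pos fun ℓ _ => hupos ℓ
    rw [div_eq_iff hprodpos.ne', ← herase]
    ring

/-- For `d ≥ 2` and `λ > 0`,
`∫_{ℝ_+^d} exp(−λ y_1⋯y_d (1/y_1+⋯+1/y_d)) dy = (Γ(1/(d−1))^d/(d−1)) λ^{−d/(d−1)}`. -/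
theorem integral_phi_d_scaled (d : ℕ) (hd : 2 ≤ d) (lam : ℝ) (hlam : 0 < lam) :
    ∫ y in (Set.univ.pi fun _ : Fin d => Set.Ioi (0 : ℝ)),
        Real.exp (-(lam * ∑ j : Fin d, ∏ ℓ ∈ Finset.univ.erase j, y ℓ)) =
      Real.Gamma (1 / ((d : ℝ) - 1)) ^ d / ((d : ℝ) - 1) *
        lam ^ (-(d : ℝ) / ((d : ℝ) - 1)) := by
  classical
  have hdR : (2:ℝ) ≤ (d:ℝ) := by exact_mod_cast hd
  have hd1R : (0:ℝ) < (d:ℝ) - 1 := by linarith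
  set s := Set.univ.pi fun _ : Fin d => Set.Ioi (0:ℝ) with hs_def
  have hs : MeasurableSet s := MeasurableSet.univ_pi fun _ => measurableSet_Ioi
  set a : ℝ := 1/((d:ℝ)-1) with ha_def
  have ha : 0 < a := by positivity
  set f1 : ℝ → ℝ := fun t => t ^ (a - 1) * Real.exp (-(lam * t)) with hf1
  -- change of variables
  have hCoV : ∫ u in s, (∏ i, f1 (u i)) = ∫ y in s, |(Tderiv d y).det| • (∏ i, f1 (Tmap d y i)) := by
    have himg : Tmap d '' s = s := Tmap_image d hd
    conv_lhs => rw [← himg]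
    exact integral_image_eq_integral_abs_det_fderiv_smul volume hs
      (fun y _ => (Tmap_hasFDerivAt d y).hasFDerivWithinAt) (Tmap_injOn d hd) _
  -- pointwise identity on s
  have hpt : ∀ y ∈ s, |(Tderiv d y).det| • (∏ i, f1 (Tmap d y i)) =
      ((d:ℝ) - 1) * Real.exp (-(lam * ∑ j : Fin d, ∏ ℓ ∈ Finset.univ.erase j, y ℓ)) := by
    intro y hy
    have hypos : ∀ i, 0 < y i := fun i => hy i (Set.mem_univ i)
    have hP : 0 < ∏ i, y i := Finset.prod_pos fun i _ => hypos i
    have hTpos : ∀ i, 0 < Tmap d y i := fun i => Finset.prod_pos fun ℓ _ => hypos ℓ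
    rw [Tderiv_det d hd y hypos, smul_eq_mul]
    have hsplit : (∏ i, f1 (Tmap d y i)) =
        (∏ i, (Tmap d y i) ^ (a - 1)) * ∏ i, Real.exp (-(lam * Tmap d y i)) := by
      rw [← Finset.prod_mul_distrib]
    have hexp : (∏ i, Real.exp (-(lam * Tmap d y i))) =
        Real.exp (-(lam * ∑ j : Fin d, ∏ ℓ ∈ Finset.univ.erase j, y ℓ)) := by
      rw [← Real.exp_sum]
      congr 1
      rw [Finset.mul_sum, ← Finset.sum_neg_distrib]
      rfl
    have hrpow : (∏ i, (Tmap d y i) ^ (a - 1)) = (∏ i, y i) ^ ((((d:ℝ)-1)) * (a - 1)) := by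
      rw [Real.finset_prod_rpow _ _ (fun i _ => (hTpos i).le), prod_Tmap d y hypos,
        ← Real.rpow_natCast (∏ i, y i) (d - 1), ← Real.rpow_mul hP.le]
      congr 2
      have : 1 ≤ d := by omega
      push_cast [this]
      ring
    have hcancel : ((∏ i, y i) ^ (d - 2)) * (∏ i, y i) ^ ((((d:ℝ)-1)) * (a - 1)) = 1 := by
      rw [← Real.rpow_natCast (∏ i, y i) (d - 2), ← Real.rpow_add hP]
      have : ((d - 2 : ℕ) : ℝ) + ((d:ℝ)-1) * (a - 1) = 0 := by
        have h2 : 2 ≤ d := hd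
        rw [ha_def]
        push_cast [h2]
        field_simp
        ring
      rw [this, Real.rpow_zero]
    rw [hsplit, hexp, hrpow]
    calc ((d:ℝ) - 1) * (∏ i, y i) ^ (d - 2) *
          ((∏ i, y i) ^ ((((d:ℝ)-1)) * (a - 1)) * Real.exp (-(lam * ∑ j : Fin d, ∏ ℓ ∈ Finset.univ.erase j, y ℓ)))
        = ((d:ℝ) - 1) * (((∏ i, y i) ^ (d - 2)) * (∏ i, y i) ^ ((((d:ℝ)-1)) * (a - 1))) *
          Real.exp (-(lam * ∑ j : Fin d, ∏ ℓ ∈ Finset.univ.erase j, y ℓ)) := by ring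
      _ = _ := by rw [hcancel]; ring
  have hmain : ∫ u in s, (∏ i, f1 (u i)) =
      ((d:ℝ) - 1) * ∫ y in s, Real.exp (-(lam * ∑ j : Fin d, ∏ ℓ ∈ Finset.univ.erase j, y ℓ)) := by
    rw [hCoV, setIntegral_congr_fun hs (fun y hy => hpt y hy), integral_const_mul]
  -- factorization into 1D integrals
  have hfact : ∫ u in s, (∏ i, f1 (u i)) = (∫ t in Set.Ioi (0:ℝ), f1 t) ^ d := by
    rw [← integral_indicator hs]
    have : s.indicator (fun u => ∏ i, f1 (u i)) =
        fun u => ∏ i, (Set.Ioi (0:ℝ)).indicator f1 (u i) := by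
      funext u
      by_cases hu : u ∈ s
      · rw [Set.indicator_of_mem hu]
        exact (Finset.prod_congr rfl fun i _ =>
          (Set.indicator_of_mem (hu i (Set.mem_univ i)) f1)).symm
      · rw [Set.indicator_of_notMem hu]
        obtain ⟨i, hi⟩ : ∃ i, u i ∉ Set.Ioi (0:ℝ) := by
          by_contra hc
          push_neg at hc
          exact hu fun i _ => hc i
        exact (Finset.prod_eq_zero (Finset.mem_univ i)
          (Set.indicator_of_notMem hi f1)).symm
    rw [this, MeasureTheory.integral_fintype_prod_volume_eq_pow ((Set.Ioi (0:ℝ)).indicator f1),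
      integral_indicator measurableSet_Ioi, Fintype.card_fin]
  have h1d : (∫ t in Set.Ioi (0:ℝ), f1 t) = (1/lam) ^ a * Real.Gamma a :=
    Real.integral_rpow_mul_exp_neg_mul_Ioi ha hlam
  have hlampow : ((1/lam) ^ a) ^ d = lam ^ (-(d : ℝ) / ((d : ℝ) - 1)) := by
    rw [one_div, Real.inv_rpow hlam.le, ← Real.rpow_neg hlam.le,
      ← Real.rpow_natCast (lam ^ (-a)) d, ← Real.rpow_mul hlam.le]
    congr 1
    rw [ha_def]
    field_simp
  have hexp_int : ∫ y in s, Real.exp (-(lam * ∑ j : Fin d, ∏ ℓ ∈ Finset.univ.erase j, y ℓ)) =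
      ((∫ t in Set.Ioi (0:ℝ), f1 t) ^ d) / ((d:ℝ) - 1) := by
    rw [← hfact, hmain]
    field_simp
  rw [hexp_int, h1d, mul_pow, hlampow]
  ring
end

section
/- Let n points be drawn uniformly and independently from the simplex S_d, d ≥ 2 fixed. Then the expected number of (d−1)-dominant skyline points is O(n(1 − d^{−d})^n) and hence tends to 0 as n → ∞. -/
open MeasureTheory Finset Filter

/-- The simplex `S_d = {x : −1 ≤ x_j ≤ 0, ∑ |x_j| ≤ 1}`. -/
def simplexSd (d : ℕ) : Set (Fin d → ℝ) :=
  {x | (∀ j, -1 ≤ x j ∧ x j ≤ 0) ∧ ∑ j : Fin d, |x j| ≤ 1}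

section Aux

/-- The corner simplex `{u : u_j ≥ 0, ∑ u_j ≤ r}`. -/
def cornerSimplex (d : ℕ) (r : ℝ) : Set (Fin d → ℝ) :=
  {u | (∀ j, 0 ≤ u j) ∧ ∑ j, u j ≤ r}

lemma measurableSet_cornerSimplex (d : ℕ) (r : ℝ) : MeasurableSet (cornerSimplex d r) := by
  have : cornerSimplex d r =
      (⋂ j, {u : Fin d → ℝ | 0 ≤ u j}) ∩ {u : Fin d → ℝ | ∑ j, u j ≤ r} := by
    ext u; simp [cornerSimplex]
  rw [this]
  exact (MeasurableSet.iInter fun j =>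
      measurableSet_le measurable_const (measurable_pi_apply j)).inter
    (measurableSet_le (Finset.measurable_sum _ fun j _ => measurable_pi_apply j) measurable_const)

lemma volume_cornerSimplex : ∀ (d : ℕ) (r : ℝ), 0 ≤ r →
    volume (cornerSimplex d r) = ENNReal.ofReal (r ^ d / d.factorial) := by
  intro d
  induction d with
  | zero =>
    intro r hr
    have h : cornerSimplex 0 r = Set.univ := by
      ext u
      simp [cornerSimplex, hr]
    rw [h]
    simp [volume_pi, Measure.pi_univ]
  | succ d ih =>
    intro r hr
    set T : Set (ℝ × (Fin d → ℝ)) :=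
      {p | (0 ≤ p.1 ∧ ∀ j, 0 ≤ p.2 j) ∧ p.1 + ∑ j, p.2 j ≤ r} with hT
    have hTm : MeasurableSet T := by
      have h1 : MeasurableSet {p : ℝ × (Fin d → ℝ) | 0 ≤ p.1} :=
        measurableSet_le measurable_const measurable_fst
      have h2 : MeasurableSet {p : ℝ × (Fin d → ℝ) | ∀ j, 0 ≤ p.2 j} := by
        rw [Set.setOf_forall]
        exact MeasurableSet.iInter fun j =>
          measurableSet_le measurable_const measurable_snd.eval
      have h3 : MeasurableSet {p : ℝ × (Fin d → ℝ) | p.1 + ∑ j, p.2 j ≤ r} :=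
        measurableSet_le (measurable_fst.add
          (Finset.measurable_sum _ fun j _ => measurable_snd.eval)) measurable_const
      exact ((h1.inter h2).inter h3 : _)
    have hmp := measurePreserving_piFinSuccAbove (fun _ : Fin (d+1) => (volume : Measure ℝ)) 0
    have hpre : cornerSimplex (d+1) r
        = (MeasurableEquiv.piFinSuccAbove (fun _ : Fin (d+1) => ℝ) 0) ⁻¹' T := by
      ext x
      simp only [Set.mem_preimage, MeasurableEquiv.piFinSuccAbove_apply,
        Fin.insertNthEquiv_symm_apply, hT, Set.mem_setOf_eq, Fin.removeNth, cornerSimplex]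
      rw [Fin.forall_iff_succAbove (0 : Fin (d+1)),
        Fin.sum_univ_succAbove (fun j => x j) (0 : Fin (d+1))]
    have hvol : volume (cornerSimplex (d+1) r) = (volume.prod (Measure.pi fun _ : Fin d => volume)) T := by
      rw [hpre, volume_pi]
      exact hmp.measure_preimage hTm.nullMeasurableSet
    rw [hvol, Measure.prod_apply hTm]
    simp_rw [← volume_pi]
    have hsec : ∀ a : ℝ, volume (Prod.mk a ⁻¹' T)
        = Set.indicator (Set.Icc (0:ℝ) r) (fun a => ENNReal.ofReal ((r - a) ^ d / d.factorial)) a := by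
      intro a
      by_cases ha : a ∈ Set.Icc (0:ℝ) r
      · rw [Set.mem_Icc] at ha
        obtain ⟨ha0, har⟩ := ha
        have : Prod.mk a ⁻¹' T = cornerSimplex d (r - a) := by
          ext u
          simp [hT, cornerSimplex, ha0, le_sub_iff_add_le']
        rw [this, ih (r - a) (by linarith), Set.indicator_of_mem (Set.mem_Icc.2 ⟨ha0, har⟩)]
      · have : Prod.mk a ⁻¹' T = ∅ := by
          ext u
          simp only [Set.mem_preimage, hT, Set.mem_setOf_eq, Set.mem_empty_iff_false, iff_false]
          rintro ⟨⟨ha0, hu⟩, hsum⟩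
          have h1 : (0:ℝ) ≤ ∑ j, u j := Finset.sum_nonneg fun j _ => hu j
          have h2 : ¬ a ≤ r := fun h => ha (Set.mem_Icc.2 ⟨ha0, h⟩)
          push_neg at h2
          linarith
        rw [this, Set.indicator_of_notMem ha]
        exact measure_empty
    rw [show (∫⁻ a, volume (Prod.mk a ⁻¹' T)) = ∫⁻ a, Set.indicator (Set.Icc (0:ℝ) r)
        (fun a => ENNReal.ofReal ((r - a) ^ d / d.factorial)) a from lintegral_congr hsec,
      lintegral_indicator measurableSet_Icc]
    have hcont : Continuous fun a : ℝ => (r - a) ^ d / (d.factorial : ℝ) := by continuity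
    have hint : IntegrableOn (fun a : ℝ => (r - a) ^ d / (d.factorial : ℝ)) (Set.Icc 0 r) :=
      hcont.integrableOn_Icc
    rw [← ofReal_integral_eq_lintegral_ofReal hint]
    · congr 1
      have : ∫ a in Set.Icc (0:ℝ) r, (r - a) ^ d / (d.factorial : ℝ)
          = ∫ a in (0:ℝ)..r, (r - a) ^ d / (d.factorial : ℝ) := by
        rw [MeasureTheory.integral_Icc_eq_integral_Ioc, ← intervalIntegral.integral_of_le hr]
      rw [this, intervalIntegral.integral_div]
      have : (∫ a in (0:ℝ)..r, (r - a) ^ d) = ∫ a in (0:ℝ)..r, a ^ d := by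
        rw [intervalIntegral.integral_comp_sub_left (fun x => x ^ d) r, sub_self, sub_zero]
      rw [this, integral_pow]
      rw [Nat.factorial_succ]
      push_cast
      rw [zero_pow (by omega : d + 1 ≠ 0)]
      field_simp
      ring
    · refine (ae_restrict_iff' measurableSet_Icc).2 (Filter.Eventually.of_forall fun a ha => ?_)
      rw [Set.mem_Icc] at ha
      exact div_nonneg (pow_nonneg (by linarith [ha.2]) _) (by positivity)

end Aux

lemma cornerSimplex_mem_bounds {d : ℕ} {r : ℝ} {u : Fin d → ℝ} (hu : u ∈ cornerSimplex d r)
    (j : Fin d) : 0 ≤ u j ∧ u j ≤ r := by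
  refine ⟨hu.1 j, le_trans ?_ hu.2⟩
  exact Finset.single_le_sum (fun i _ => hu.1 i) (Finset.mem_univ j)

lemma simplexSd_eq_preimage (d : ℕ) :
    simplexSd d = (fun y : Fin d → ℝ => -y) ⁻¹' cornerSimplex d 1 := by
  ext y
  simp only [simplexSd, cornerSimplex, Set.mem_preimage, Set.mem_setOf_eq, Pi.neg_apply]
  constructor
  · rintro ⟨h1, h2⟩
    refine ⟨fun j => by linarith [(h1 j).2], le_trans (le_of_eq ?_) h2⟩
    exact Finset.sum_congr rfl fun j _ => (abs_of_nonpos (h1 j).2).symm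
  · rintro ⟨h1, h2⟩
    have habs : ∀ j, |y j| = -y j := fun j => abs_of_nonpos (by linarith [h1 j])
    have hsum : ∑ j, |y j| ≤ 1 := by
      rw [Finset.sum_congr rfl fun j _ => habs j]; exact h2
    refine ⟨fun j => ⟨?_, by linarith [h1 j]⟩, hsum⟩
    have := Finset.single_le_sum (fun i (_ : i ∈ Finset.univ) => h1 i) (Finset.mem_univ j)
    linarith
  
lemma measurableSet_simplexSd (d : ℕ) : MeasurableSet (simplexSd d) := by
  rw [simplexSd_eq_preimage]
  exact (measurableSet_cornerSimplex d 1).preimage measurable_neg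

lemma volume_simplexSd (d : ℕ) :
    volume (simplexSd d) = ENNReal.ofReal (1 / d.factorial) := by
  rw [simplexSd_eq_preimage,
    (Measure.measurePreserving_neg (volume : Measure (Fin d → ℝ))).measure_preimage
      (measurableSet_cornerSimplex d 1).nullMeasurableSet,
    volume_cornerSimplex d 1 zero_le_one, one_pow]

lemma volume_dominating_lower (d : ℕ) (hd : 2 ≤ d) (x : Fin d → ℝ) (hx : x ∈ simplexSd d) :
    ENNReal.ofReal (((d : ℝ) ^ d)⁻¹ / d.factorial)
      ≤ volume {y ∈ simplexSd d | KDominates (d - 1) y x} := by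
  have hdpos : 0 < d := by omega
  have hd2 : (2 : ℝ) ≤ (d : ℝ) := by exact_mod_cast hd
  obtain ⟨hxb, hxs⟩ := hx
  -- j0 : index where x is smallest (|x| largest)
  obtain ⟨j0, -, hj0⟩ := Finset.exists_min_image Finset.univ x ⟨⟨0, hdpos⟩, Finset.mem_univ _⟩
  obtain ⟨j1, hj1⟩ := Fintype.exists_ne_of_one_lt_card (by rw [Fintype.card_fin]; omega) j0
  -- the sum over the other coordinates
  set A : ℝ := ∑ j ∈ Finset.univ.erase j0, (-(x j)) with hA
  have hAnonneg : 0 ≤ A := Finset.sum_nonneg fun j _ => neg_nonneg.2 (hxb j).2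
  have hAm : A + (-(x j0)) = ∑ j, (-(x j)) := Finset.sum_erase_add _ _ (Finset.mem_univ j0)
  have hsum_abs : ∑ j, (-(x j)) ≤ 1 := by
    refine le_trans (le_of_eq ?_) hxs
    exact Finset.sum_congr rfl fun j _ => (abs_of_nonpos (hxb j).2).symm
  have hAcard : A ≤ ((d : ℝ) - 1) * (-(x j0)) := by
    have hcard : (Finset.univ.erase j0).card = d - 1 := by
      rw [Finset.card_erase_of_mem (Finset.mem_univ j0)]
      simp
    have := Finset.sum_le_card_nsmul (Finset.univ.erase j0) (fun j => -(x j)) (-(x j0))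
      (fun j _ => neg_le_neg (hj0 j (Finset.mem_univ j)))
    rw [hcard, nsmul_eq_mul] at this
    have hc : ((d - 1 : ℕ) : ℝ) = (d : ℝ) - 1 := by
      have : (1 : ℕ) ≤ d := by omega
      push_cast [Nat.cast_sub this]
      ring
    rw [hc] at this
    exact this
  set r : ℝ := 1 - A with hr
  have hrd : ((d : ℝ))⁻¹ ≤ r := by
    have hP : 0 ≤ ((d : ℝ) - 1) * (1 - (A + (-(x j0)))) :=
      mul_nonneg (by linarith) (by linarith [hAm ▸ hsum_abs])
    rw [hr, inv_eq_one_div, div_le_iff₀ (by linarith : (0:ℝ) < (d:ℝ))]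
    nlinarith [hP, hAcard]
  have hr0 : 0 ≤ r := le_trans (by positivity) hrd
  -- the translation center
  set c : Fin d → ℝ := Function.update x j0 0 with hc
  have hcj0 : c j0 = 0 := Function.update_self j0 0 x
  have hcne : ∀ j, j ≠ j0 → c j = x j := fun j hj => Function.update_of_ne hj 0 x
  -- K' is a translated corner simplex inside the dominating set (up to a null set)
  set K' : Set (Fin d → ℝ) := (fun y => c - y) ⁻¹' cornerSimplex d r with hK'
  have hvolK' : volume K' = ENNReal.ofReal (r ^ d / d.factorial) := by
    rw [hK', (Measure.measurePreserving_sub_left (volume : Measure (Fin d → ℝ)) c).measure_preimage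
      (measurableSet_cornerSimplex d r).nullMeasurableSet, volume_cornerSimplex d r hr0]
  set N : Set (Fin d → ℝ) := {y | y j1 = x j1} with hN
  have hNnull : volume N = 0 := by
    have : N = Set.pi Set.univ (fun j => if j = j1 then {x j1} else Set.univ) := by
      ext y
      simp only [hN, Set.mem_setOf_eq, Set.mem_pi, Set.mem_univ, forall_true_left]
      constructor
      · intro h j
        by_cases hj : j = j1
        · subst hj; simpa using h
        · simp [hj]
      · intro h
        have := h j1
        simpa using this
    rw [this, volume_pi_pi]
    refine Finset.prod_eq_zero (Finset.mem_univ j1) ?_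
    simp
  have hsub : K' \ N ⊆ {y ∈ simplexSd d | KDominates (d - 1) y x} := by
    rintro y ⟨hyK, hyN⟩
    rw [hK', Set.mem_preimage] at hyK
    have hu0 : ∀ j, 0 ≤ c j - y j := fun j => by simpa using hyK.1 j
    have husum : ∑ j, (c j - y j) ≤ r := by simpa using hyK.2
    have hule : ∀ j, c j - y j ≤ r := fun j => by
      have := Finset.single_le_sum (fun i (_ : i ∈ Finset.univ) => hu0 i) (Finset.mem_univ j)
      linarith
    have hyle : ∀ j, j ≠ j0 → y j ≤ x j := fun j hj => by
      have := hu0 j; rw [hcne j hj] at this; linarith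
    have hxA : ∀ j, j ≠ j0 → -(x j) ≤ A := by
      intro j hj
      rw [hA]
      exact Finset.single_le_sum (fun i (_ : i ∈ Finset.univ.erase j0) => neg_nonneg.2 (hxb i).2)
        (Finset.mem_erase.2 ⟨hj, Finset.mem_univ j⟩)
    have hymem : y ∈ simplexSd d := by
      have hyb : ∀ j, -1 ≤ y j ∧ y j ≤ 0 := by
        intro j
        by_cases hj : j = j0
        · have h1 := hule j0
          rw [hcj0] at h1
          have h2 := hu0 j0
          rw [hcj0] at h2
          rw [hj]
          exact ⟨by linarith [hAnonneg], by linarith⟩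
        · have h1 := hule j
          rw [hcne j hj] at h1
          have h2 := hxA j hj
          constructor
          · have : r = 1 - A := hr
            linarith
          · linarith [hyle j hj, (hxb j).2]
      refine ⟨hyb, ?_⟩
      have habs : ∀ j, |y j| = -(y j) := fun j => abs_of_nonpos (hyb j).2
      rw [Finset.sum_congr rfl fun j _ => habs j]
      have hsplit : ∑ j, (-(y j)) = ∑ j, (c j - y j) + ∑ j, (-(c j)) := by
        rw [← Finset.sum_add_distrib]
        exact Finset.sum_congr rfl fun j _ => by ring
      have hsumc : ∑ j, (-(c j)) = A := by
        have h0 : ∑ j, (-(c j)) = ∑ j ∈ Finset.univ.erase j0, (-(c j)) + -(c j0) :=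
          (Finset.sum_erase_add Finset.univ _ (Finset.mem_univ j0)).symm
        rw [h0, hcj0, neg_zero, add_zero, hA]
        exact Finset.sum_congr rfl fun j hj => by
          rw [hcne j (Finset.mem_erase.1 hj).1]
      rw [hsplit, hsumc]
      linarith [husum]
    refine ⟨hymem, Finset.univ.erase j0, ?_, ?_, ?_⟩
    · rw [Finset.card_erase_of_mem (Finset.mem_univ j0)]
      simp
    · intro j hj
      exact hyle j (Finset.mem_erase.1 hj).1
    · refine ⟨j1, Finset.mem_erase.2 ⟨hj1, Finset.mem_univ j1⟩, ?_⟩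
      have h1 := hyle j1 hj1
      have h2 : y j1 ≠ x j1 := hyN
      exact lt_of_le_of_ne h1 h2
  calc ENNReal.ofReal (((d : ℝ) ^ d)⁻¹ / d.factorial)
      ≤ ENNReal.ofReal (r ^ d / d.factorial) := by
        apply ENNReal.ofReal_le_ofReal
        gcongr
        rw [← inv_pow]
        exact pow_le_pow_left₀ (inv_nonneg.2 (by positivity)) hrd d
    _ = volume K' := hvolK'.symm
    _ = volume (K' \ N) := (measure_diff_null hNnull).symm
    _ ≤ volume {y ∈ simplexSd d | KDominates (d - 1) y x} := measure_mono hsub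

/-- The expected number of `(d−1)`-dominant skyline points of `n` uniform points
in the simplex, `n d! ∫_{S_d} (1 − d!|B^{[s]}_{d−1}(x)|)^{n−1} dx`, is
`O(n (1 − d^{−d})^n)` and tends to `0` as `n → ∞`. -/
theorem expected_simplex_dominant_vanishes (d : ℕ) (hd : 2 ≤ d) :
    (∃ C : ℝ, 0 < C ∧ ∀ n : ℕ, 1 ≤ n →
        (n : ℝ) * (d.factorial : ℝ) *
            ∫ x in simplexSd d,
              (1 - (d.factorial : ℝ) *
                  (volume {y ∈ simplexSd d | KDominates (d - 1) y x}).toReal) ^ (n - 1)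
          ≤ C * n * (1 - ((d : ℝ) ^ d)⁻¹) ^ n) ∧
      Tendsto (fun n : ℕ =>
          (n : ℝ) * (d.factorial : ℝ) *
            ∫ x in simplexSd d,
              (1 - (d.factorial : ℝ) *
                  (volume {y ∈ simplexSd d | KDominates (d - 1) y x}).toReal) ^ (n - 1))
        atTop (nhds 0) := by
  have hd2 : (2:ℝ) ≤ (d:ℝ) := by exact_mod_cast hd
  set c : ℝ := 1 - ((d : ℝ) ^ d)⁻¹ with hcdef
  have hdd1 : (1:ℝ) < (d:ℝ) ^ d := by
    have h1 : (1:ℝ) < (d:ℝ) := by linarith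
    exact one_lt_pow₀ h1 (by omega)
  have hc0 : 0 < c := by
    have : ((d:ℝ)^d)⁻¹ < 1 := inv_lt_one_of_one_lt₀ hdd1
    simp only [hcdef]; linarith
  have hc1 : c < 1 := by
    have : 0 < ((d:ℝ)^d)⁻¹ := by positivity
    simp only [hcdef]; linarith
  have hfact_pos : (0:ℝ) < d.factorial := by positivity
  have hSvol : volume (simplexSd d) = ENNReal.ofReal (1 / d.factorial) := volume_simplexSd d
  have hSfin : volume (simplexSd d) < ⊤ := by rw [hSvol]; exact ENNReal.ofReal_lt_top
  have hbound : ∀ x ∈ simplexSd d,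
      0 ≤ 1 - (d.factorial : ℝ) * (volume {y ∈ simplexSd d | KDominates (d-1) y x}).toReal ∧
      1 - (d.factorial : ℝ) * (volume {y ∈ simplexSd d | KDominates (d-1) y x}).toReal ≤ c := by
    intro x hx
    set v := volume {y ∈ simplexSd d | KDominates (d-1) y x} with hv
    have hle : v ≤ volume (simplexSd d) := measure_mono (Set.sep_subset _ _)
    have hvfin : v ≠ ⊤ := (lt_of_le_of_lt hle hSfin).ne
    have hup : v.toReal ≤ 1 / d.factorial := by
      have := ENNReal.toReal_mono (by rw [hSvol]; exact ENNReal.ofReal_ne_top) hle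
      rwa [hSvol, ENNReal.toReal_ofReal (by positivity)] at this
    have hlow : ((d:ℝ)^d)⁻¹ / d.factorial ≤ v.toReal := by
      have h := volume_dominating_lower d hd x hx
      rw [← hv] at h
      exact (ENNReal.ofReal_le_iff_le_toReal hvfin).1 h
    constructor
    · have h1 : (d.factorial : ℝ) * v.toReal ≤ (d.factorial:ℝ) * (1/d.factorial) :=
        mul_le_mul_of_nonneg_left hup (le_of_lt hfact_pos)
      rw [mul_one_div, div_self (ne_of_gt hfact_pos)] at h1
      linarith
    · have h1 : (d.factorial:ℝ) * (((d:ℝ)^d)⁻¹ / d.factorial) ≤ (d.factorial : ℝ) * v.toReal :=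
        mul_le_mul_of_nonneg_left hlow (le_of_lt hfact_pos)
      have h2 : (d.factorial:ℝ) * (((d:ℝ)^d)⁻¹ / d.factorial) = ((d:ℝ)^d)⁻¹ := by
        field_simp
      rw [h2] at h1
      simp only [hcdef]
      linarith
  have hInonneg : ∀ n : ℕ, 0 ≤ ∫ x in simplexSd d,
      (1 - (d.factorial : ℝ) *
        (volume {y ∈ simplexSd d | KDominates (d - 1) y x}).toReal) ^ (n - 1) := fun n =>
    setIntegral_nonneg (measurableSet_simplexSd d) fun x hx =>
      pow_nonneg (hbound x hx).1 _
  have hIle : ∀ n : ℕ, (∫ x in simplexSd d,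
      (1 - (d.factorial : ℝ) *
        (volume {y ∈ simplexSd d | KDominates (d - 1) y x}).toReal) ^ (n - 1))
      ≤ c ^ (n - 1) * (1 / d.factorial) := by
    intro n
    have hnorm := norm_setIntegral_le_of_norm_le_const_ae (μ := volume)
      (s := simplexSd d) (C := c ^ (n - 1)) hSfin
      ((ae_restrict_iff' (measurableSet_simplexSd d)).2 (Filter.Eventually.of_forall
        fun x hx => by
          rw [Real.norm_eq_abs, abs_pow,
            abs_of_nonneg (hbound x hx).1]
          exact pow_le_pow_left₀ (hbound x hx).1 (hbound x hx).2 _))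
    rw [measureReal_def, hSvol, ENNReal.toReal_ofReal (by positivity)] at hnorm
    calc (∫ x in simplexSd d, (1 - (d.factorial : ℝ) *
          (volume {y ∈ simplexSd d | KDominates (d - 1) y x}).toReal) ^ (n - 1))
        ≤ ‖∫ x in simplexSd d, (1 - (d.factorial : ℝ) *
          (volume {y ∈ simplexSd d | KDominates (d - 1) y x}).toReal) ^ (n - 1)‖ := by
          rw [Real.norm_eq_abs]; exact le_abs_self _
      _ ≤ c ^ (n - 1) * (1 / d.factorial) := hnorm
  have key : ∀ n : ℕ, 1 ≤ n →
      (n : ℝ) * (d.factorial : ℝ) *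
        (∫ x in simplexSd d, (1 - (d.factorial : ℝ) *
          (volume {y ∈ simplexSd d | KDominates (d - 1) y x}).toReal) ^ (n - 1))
      ≤ c⁻¹ * n * c ^ n := by
    intro n hn
    have h1 : (n : ℝ) * (d.factorial : ℝ) *
        (∫ x in simplexSd d, (1 - (d.factorial : ℝ) *
          (volume {y ∈ simplexSd d | KDominates (d - 1) y x}).toReal) ^ (n - 1))
        ≤ (n : ℝ) * (d.factorial : ℝ) * (c ^ (n - 1) * (1 / d.factorial)) :=
      mul_le_mul_of_nonneg_left (hIle n)
        (mul_nonneg (Nat.cast_nonneg n) (le_of_lt hfact_pos))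
    have hpow : c ^ n = c ^ (n - 1) * c := by
      rw [← pow_succ, Nat.sub_add_cancel hn]
    have h2 : (n : ℝ) * (d.factorial : ℝ) * (c ^ (n - 1) * (1 / d.factorial))
        = c⁻¹ * n * c ^ n := by
      rw [hpow]
      field_simp
    linarith
  have hnn : ∀ n : ℕ, 0 ≤ (n : ℝ) * (d.factorial : ℝ) *
      (∫ x in simplexSd d, (1 - (d.factorial : ℝ) *
        (volume {y ∈ simplexSd d | KDominates (d - 1) y x}).toReal) ^ (n - 1)) := fun n =>
    mul_nonneg (mul_nonneg (Nat.cast_nonneg n) (le_of_lt hfact_pos)) (hInonneg n)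
  refine ⟨⟨c⁻¹, inv_pos.2 hc0, fun n hn => key n hn⟩, ?_⟩
  have hub : Tendsto (fun n : ℕ => c⁻¹ * n * c ^ n) atTop (nhds 0) := by
    have h := (tendsto_self_mul_const_pow_of_lt_one hc0.le hc1).const_mul c⁻¹
    simpa [mul_assoc] using h
  refine tendsto_of_tendsto_of_tendsto_of_le_of_le' tendsto_const_nhds hub
    (Filter.Eventually.of_forall fun n => hnn n) ?_
  exact Filter.eventually_atTop.2 ⟨1, fun n hn => key n hn⟩
end

section
/- Let n points be drawn uniformly and independently from the finite product space P = ∏_{j=1}^d {1,…,u_j} with each u_j ≥ 2, and let M be the number of k-dominant skyline points (1 ≤ k ≤ d). Then E[M]/n → 1/u as n → ∞, where u = ∏ u_j. -/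
open Finset Filter Classical

noncomputable section
open scoped Classical

/-- `p` k-dominates `q` in the categorical product space. -/
def KDominatesCat {d : ℕ} {u : Fin d → ℕ} (k : ℕ)
    (p q : (j : Fin d) → Fin (u j)) : Prop :=
  ∃ S : Finset (Fin d), k ≤ S.card ∧ (∀ j ∈ S, (p j : ℕ) ≤ (q j : ℕ)) ∧
    ∃ j ∈ S, (p j : ℕ) < (q j : ℕ)

/-- Categorical model: for `n` uniform i.i.d. points in `P = ∏_j {1,…,u_j}`
with each `u_j ≥ 2` and `1 ≤ k ≤ d`, the expected number of `k`-dominant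
skyline points, `E[M] = (n/u) ∑_{x∈P} (1 − |B_k(x)|/u)^{n−1}`, satisfies
`E[M]/n → 1/u` where `u = ∏ u_j`. -/
theorem expected_categorical_limit (d k : ℕ) (hd : 2 ≤ d) (hk1 : 1 ≤ k)
    (hkd : k ≤ d) (u : Fin d → ℕ) (hu : ∀ j, 2 ≤ u j) :
    Tendsto (fun n : ℕ =>
        ((n : ℝ) / (∏ j : Fin d, (u j : ℝ)) *
            ∑ x : (j : Fin d) → Fin (u j),
              (1 - ((Finset.univ.filter
                    (fun p : (j : Fin d) → Fin (u j) => KDominatesCat k p x)).card : ℝ) /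
                  (∏ j : Fin d, (u j : ℝ))) ^ (n - 1)) / (n : ℝ))
      atTop (nhds (1 / ∏ j : Fin d, (u j : ℝ))) := by
  set U : ℝ := ∏ j : Fin d, (u j : ℝ) with hU
  have hu0 : ∀ j, 0 < u j := fun j => lt_of_lt_of_le (by norm_num) (hu j)
  have hUpos : 0 < U := Finset.prod_pos (fun j _ => by exact_mod_cast hu0 j)
  haveI : ∀ j, Nonempty (Fin (u j)) := fun j => ⟨⟨0, hu0 j⟩⟩
  set B : ((j : Fin d) → Fin (u j)) → ℕ := fun x =>
    (Finset.univ.filter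
      (fun p : (j : Fin d) → Fin (u j) => KDominatesCat k p x)).card with hB
  set x₀ : (j : Fin d) → Fin (u j) := fun j => ⟨0, hu0 j⟩ with hx0
  -- B x₀ = 0
  have hB0 : B x₀ = 0 := by
    rw [hB, Finset.card_eq_zero, Finset.filter_eq_empty_iff]
    intro p _
    rintro ⟨S, _, _, j, hjS, hlt⟩
    simp [hx0] at hlt
  -- for x ≠ x₀, 1 ≤ B x
  have hB1 : ∀ x, x ≠ x₀ → 1 ≤ B x := by
    intro x hx
    have : ∃ j, (x j : ℕ) ≠ 0 := by
      by_contra h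
      push_neg at h
      apply hx
      funext j
      exact Fin.ext (h j)
    obtain ⟨j, hj⟩ := this
    have hjpos : 0 < (x j : ℕ) := Nat.pos_of_ne_zero hj
    set p : (j' : Fin d) → Fin (u j') := fun j' =>
      if h : j' = j then ⟨(x j : ℕ) - 1, by
        rw [h]; exact Nat.lt_of_le_of_lt (Nat.sub_le _ _) (x j).isLt⟩
      else x j' with hp
    have hdom : KDominatesCat k p x := by
      refine ⟨Finset.univ, ?_, ?_, j, Finset.mem_univ j, ?_⟩
      · simpa using hkd
      · intro j' _
        by_cases h : j' = j
        · subst h; simp [hp, Nat.sub_le]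
        · simp [hp, h]
      · simp only [hp, dif_pos rfl]
        exact Nat.sub_lt hjpos one_pos
    rw [hB, Nat.one_le_iff_ne_zero, ← Nat.pos_iff_ne_zero, Finset.card_pos]
    exact ⟨p, Finset.mem_filter.mpr ⟨Finset.mem_univ p, hdom⟩⟩
  -- cardinality bound: B x ≤ U
  have hBU : ∀ x, (B x : ℝ) ≤ U := by
    intro x
    have h1 : B x ≤ Fintype.card ((j : Fin d) → Fin (u j)) :=
      le_trans (Finset.card_filter_le _ _) (le_of_eq (Finset.card_univ))
    have h2 : (Fintype.card ((j : Fin d) → Fin (u j)) : ℝ) = U := by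
      rw [hU]
      push_cast [Fintype.card_pi, Fintype.card_fin]
      rfl
    calc (B x : ℝ) ≤ (Fintype.card ((j : Fin d) → Fin (u j)) : ℝ) := by exact_mod_cast h1
      _ = U := h2
  -- sum tends to 1
  have hsum : Tendsto (fun n : ℕ =>
      ∑ x : (j : Fin d) → Fin (u j), (1 - (B x : ℝ) / U) ^ (n - 1)) atTop (nhds 1) := by
    have key : Tendsto (fun n : ℕ =>
        ∑ x : (j : Fin d) → Fin (u j), (1 - (B x : ℝ) / U) ^ (n - 1)) atTop
        (nhds (∑ x : (j : Fin d) → Fin (u j), if x = x₀ then (1:ℝ) else 0)) := by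
      apply tendsto_finset_sum
      intro x _
      by_cases hx : x = x₀
      · subst hx
        simp only [hB0, if_pos rfl]
        simp
      · rw [if_neg hx]
        have hr0 : 0 ≤ 1 - (B x : ℝ) / U := by
          have := hBU x
          have : (B x : ℝ) / U ≤ 1 := (div_le_one hUpos).mpr this
          linarith
        have hr1 : 1 - (B x : ℝ) / U < 1 := by
          have hb := hB1 x hx
          have : (0:ℝ) < (B x : ℝ) / U := div_pos (by exact_mod_cast hb) hUpos
          linarith
        have hpow : Tendsto (fun m : ℕ => (1 - (B x : ℝ) / U) ^ m) atTop (nhds 0) :=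
          tendsto_pow_atTop_nhds_zero_of_lt_one hr0 hr1
        exact hpow.comp (tendsto_sub_atTop_nat 1)
    have : (∑ x : (j : Fin d) → Fin (u j), if x = x₀ then (1:ℝ) else 0) = 1 := by
      simp
    rwa [this] at key
  -- final rewrite
  have heven : ∀ᶠ n : ℕ in atTop,
      ((n : ℝ) / U * ∑ x : (j : Fin d) → Fin (u j), (1 - (B x : ℝ) / U) ^ (n - 1)) / (n : ℝ)
      = (∑ x : (j : Fin d) → Fin (u j), (1 - (B x : ℝ) / U) ^ (n - 1)) / U := by
    filter_upwards [eventually_ge_atTop 1] with n hn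
    have hn0 : (n : ℝ) ≠ 0 := by positivity
    field_simp
  have hlim : Tendsto (fun n : ℕ =>
      (∑ x : (j : Fin d) → Fin (u j), (1 - (B x : ℝ) / U) ^ (n - 1)) / U) atTop
      (nhds (1 / U)) := hsum.div_const U
  exact (Tendsto.congr' (heven.mono fun n h => h.symm) hlim)
end
end

section
/- In the categorical model with n points drawn uniformly and independently from P = ∏_{j=1}^d {1,…,u_j} (u_j ≥ 2), let M_n be the number of k-dominant skyline points and X_n the number of sample points equal to (1,…,1). Then X_n is Binomial(n, 1/u) with u = ∏ u_j, and P(M_n ≠ X_n) ≤ (1 − 1/u)^n; hence M_n is asymptotically Binomial(n, 1/u) in total variation. -/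
open Finset MeasureTheory
open scoped Classical ENNReal

noncomputable section

lemma mem_pi_filter {n : ℕ} {P : Type*} [Fintype P] [DecidableEq P] (p₀ : P)
    (S : Finset (Fin n)) (ω : Fin n → P)
    (h : ω ∈ Fintype.piFinset (fun i => if i ∈ S then ({p₀} : Finset P) else univ.erase p₀)) :
    (univ.filter fun i => ω i = p₀) = S := by
  ext i
  have hi := Fintype.mem_piFinset.1 h i
  simp only [mem_filter, mem_univ, true_and]
  by_cases hiS : i ∈ S <;> simp [hiS] at hi ⊢ <;> tauto

lemma count_exact {n : ℕ} {P : Type*} [Fintype P] [DecidableEq P] (p₀ : P) (ℓ : ℕ) :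
    (univ.filter fun ω : Fin n → P => (univ.filter fun i => ω i = p₀).card = ℓ).card
      = n.choose ℓ * (Fintype.card P - 1) ^ (n - ℓ) := by
  by_cases hℓ : ℓ ≤ n
  · have key : (univ.filter fun ω : Fin n → P => (univ.filter fun i => ω i = p₀).card = ℓ)
        = (powersetCard ℓ (univ : Finset (Fin n))).biUnion
            (fun S => Fintype.piFinset fun i => if i ∈ S then ({p₀} : Finset P)
              else univ.erase p₀) := by
      ext ω
      simp only [mem_filter, mem_univ, true_and, mem_biUnion, mem_powersetCard]
      constructor
      · intro h
        refine ⟨univ.filter fun i => ω i = p₀, ⟨filter_subset _ _, h⟩, ?_⟩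
        refine Fintype.mem_piFinset.2 fun i => ?_
        by_cases hi : ω i = p₀ <;> simp [hi]
      · rintro ⟨S, ⟨-, hcard⟩, hS⟩
        rw [mem_pi_filter p₀ S ω hS]; exact hcard
    have hdisj : ∀ S ∈ powersetCard ℓ (univ : Finset (Fin n)), ∀ T ∈ powersetCard ℓ univ,
        S ≠ T → Disjoint (Fintype.piFinset fun i => if i ∈ S then ({p₀} : Finset P)
          else univ.erase p₀) (Fintype.piFinset fun i => if i ∈ T then ({p₀} : Finset P)
          else univ.erase p₀) := by
      intro S _ T _ hne
      refine Finset.disjoint_left.2 fun ω h1 h2 => hne ?_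
      rw [← mem_pi_filter p₀ S ω h1, mem_pi_filter p₀ T ω h2]
    rw [key, card_biUnion hdisj]
    have hcardpi : ∀ S ∈ powersetCard ℓ (univ : Finset (Fin n)),
        (Fintype.piFinset fun i => if i ∈ S then ({p₀} : Finset P)
          else univ.erase p₀).card = (Fintype.card P - 1) ^ (n - ℓ) := by
      intro S hS
      rw [mem_powersetCard] at hS
      rw [Fintype.card_piFinset]
      have : ∀ i : Fin n, (if i ∈ S then ({p₀} : Finset P) else univ.erase p₀).card
          = if i ∈ S then 1 else (Fintype.card P - 1) := by
        intro i; by_cases hi : i ∈ S <;> simp [hi, card_erase_of_mem, card_univ]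
      simp only [this]
      rw [← Finset.prod_mul_prod_compl S]
      have h1 : ∏ x ∈ S, (if x ∈ S then 1 else (Fintype.card P - 1)) = 1 :=
        Finset.prod_eq_one fun x hx => by simp [hx]
      have h2 : ∏ x ∈ Sᶜ, (if x ∈ S then 1 else (Fintype.card P - 1))
          = (Fintype.card P - 1) ^ (Sᶜ.card) :=
        Finset.prod_eq_pow_card fun x hx => by simp [Finset.mem_compl.1 hx]
      rw [h1, h2, one_mul, Finset.card_compl, Fintype.card_fin, hS.2]
    rw [Finset.sum_congr rfl hcardpi, Finset.sum_const, card_powersetCard, card_univ,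
      Fintype.card_fin, smul_eq_mul]
  · rw [Nat.choose_eq_zero_of_lt (by omega), zero_mul, Finset.card_eq_zero,
      Finset.filter_eq_empty_iff]
    intro ω _
    have : (univ.filter fun i => ω i = p₀).card ≤ n := by
      simpa using card_filter_le (univ : Finset (Fin n)) _
    omega

lemma count_none {n : ℕ} {P : Type*} [Fintype P] [DecidableEq P] (p₀ : P) :
    (univ.filter fun ω : Fin n → P => ∀ i, ω i ≠ p₀).card
      = (Fintype.card P - 1) ^ n := by
  have : (univ.filter fun ω : Fin n → P => ∀ i, ω i ≠ p₀)
      = Fintype.piFinset (fun _ : Fin n => univ.erase p₀) := by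
    ext ω; simp [Fintype.mem_piFinset]
  rw [this, Fintype.card_piFinset]
  simp [card_erase_of_mem, card_univ]

lemma real_calc (n ℓ m : ℕ) (hm : 1 ≤ m) :
    ((n.choose ℓ * (m - 1) ^ (n - ℓ) : ℕ) : ℝ) / ((m : ℝ)) ^ n
      = (n.choose ℓ : ℝ) * (1 / (m : ℝ)) ^ ℓ * (1 - 1 / (m : ℝ)) ^ (n - ℓ) := by
  by_cases hℓ : ℓ ≤ n
  · have hm0 : (0 : ℝ) < m := by exact_mod_cast Nat.lt_of_lt_of_le Nat.zero_lt_one hm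
    have hsub : ((m - 1 : ℕ) : ℝ) = (m : ℝ) - 1 := by
      push_cast [Nat.cast_sub hm]; ring
    have hone : (1 : ℝ) - 1 / m = ((m : ℝ) - 1) / m := by field_simp
    have hpow : (m : ℝ) ^ n = (m : ℝ) ^ ℓ * (m : ℝ) ^ (n - ℓ) := by
      rw [← pow_add]; congr 1; omega
    push_cast [hsub]
    rw [hone, div_pow, div_pow, one_pow, hpow]
    field_simp
  · rw [Nat.choose_eq_zero_of_lt (by omega)]
    simp

/-- Categorical model: with `n` uniform i.i.d. points in `P = ∏_j {1,…,u_j}`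
(`u_j ≥ 2`), let `M` be the number of `k`-dominant skyline points and `X` the
number of sample points equal to the minimal point `(1,…,1)`. Then `X` is
binomially distributed with parameters `n` and `1/u`, and
`P(M ≠ X) ≤ (1 − 1/u)^n`, where `u = ∏ u_j`. -/
theorem categorical_asymptotically_binomial (d k n : ℕ) (hd : 2 ≤ d)
    (hk1 : 1 ≤ k) (hkd : k ≤ d) (hn : 1 ≤ n) (u : Fin d → ℕ) (hu : ∀ j, 2 ≤ u j) :
    ∀ μ : Measure (Fin n → (j : Fin d) → Fin (u j)),
      μ = (letI : Nonempty ((j : Fin d) → Fin (u j)) :=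
              ⟨fun j => ⟨0, by have := hu j; omega⟩⟩;
            (PMF.uniformOfFintype (Fin n → (j : Fin d) → Fin (u j))).toMeasure) →
      (∀ ℓ : ℕ,
          μ {ω | (Finset.univ.filter
                (fun i : Fin n => ∀ j, (ω i j : ℕ) = 0)).card = ℓ} =
            ENNReal.ofReal ((n.choose ℓ : ℝ) *
              (1 / ∏ j : Fin d, (u j : ℝ)) ^ ℓ *
              (1 - 1 / ∏ j : Fin d, (u j : ℝ)) ^ (n - ℓ))) ∧
      μ {ω | (Finset.univ.filter
            (fun i : Fin n => ¬∃ i' : Fin n, i' ≠ i ∧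
                KDominatesCat k (ω i') (ω i))).card ≠
          (Finset.univ.filter (fun i : Fin n => ∀ j, (ω i j : ℕ) = 0)).card} ≤
        ENNReal.ofReal ((1 - 1 / ∏ j : Fin d, (u j : ℝ)) ^ n) := by
  intro μ hμ
  haveI hPne : Nonempty ((j : Fin d) → Fin (u j)) :=
    ⟨fun j => ⟨0, by have := hu j; omega⟩⟩
  set P := (j : Fin d) → Fin (u j) with hPdef
  set p₀ : P := fun j => ⟨0, by have := hu j; omega⟩ with hp₀
  have hzero : ∀ q : P, (∀ j, (q j : ℕ) = 0) ↔ q = p₀ := by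
    intro q
    constructor
    · intro h; funext j; exact Fin.ext (h j)
    · intro h j; rw [h]
  have hfil : ∀ ω : Fin n → P,
      (univ.filter fun i : Fin n => ∀ j, ((ω i j : ℕ) = 0))
        = (univ.filter fun i : Fin n => ω i = p₀) :=
    fun ω => Finset.filter_congr fun i _ => by rw [hzero]
  set m : ℕ := ∏ j : Fin d, u j with hm
  have hm1 : 1 ≤ m := Finset.one_le_prod' fun j _ => by have := hu j; omega
  have hU : ((m : ℕ) : ℝ) = ∏ j : Fin d, (u j : ℝ) := by push_cast [hm]; rfl
  have hcardP : Fintype.card P = m := by simp [hPdef, hm]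
  have hmeas : ∀ s : Finset (Fin n → P), μ ↑s = (s.card : ℝ≥0∞) / ((m ^ n : ℕ) : ℝ≥0∞) := by
    intro s
    rw [hμ, PMF.toMeasure_uniformOfFintype_apply _ (Set.toFinite _).measurableSet]
    congr 1
    · simp [Fintype.card_coe]
    · rw [Fintype.card_fun, hcardP, Fintype.card_fin]
  have hmpos : (0 : ℝ) < ((m ^ n : ℕ) : ℝ) := by positivity
  have hconv : ∀ a : ℕ, ((a : ℝ≥0∞) / ((m ^ n : ℕ) : ℝ≥0∞))
      = ENNReal.ofReal ((a : ℝ) / ((m ^ n : ℕ) : ℝ)) := by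
    intro a
    rw [ENNReal.ofReal_div_of_pos hmpos, ENNReal.ofReal_natCast, ENNReal.ofReal_natCast]
  constructor
  · intro ℓ
    have hset : {ω : Fin n → P | (univ.filter fun i : Fin n => ∀ j, ((ω i j : ℕ) = 0)).card = ℓ}
        = ↑(univ.filter fun ω : Fin n → P =>
            (univ.filter fun i : Fin n => ω i = p₀).card = ℓ) := by
      ext ω
      simp only [Set.mem_setOf_eq, Finset.coe_filter, mem_univ, true_and, hfil ω]
    rw [hset, hmeas, count_exact, hconv, hcardP]
    rw [← hU]
    exact congrArg ENNReal.ofReal (by rw [Nat.cast_pow, real_calc n ℓ m hm1])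
  · have dom : ∀ ω : Fin n → P, ∀ i₀ : Fin n, (∀ j, (ω i₀ j : ℕ) = 0) →
        (univ.filter fun i : Fin n => ¬∃ i' : Fin n, i' ≠ i ∧
            KDominatesCat k (ω i') (ω i))
          = (univ.filter fun i : Fin n => ∀ j, ((ω i j : ℕ) = 0)) := by
      intro ω i₀ h₀
      refine Finset.filter_congr fun i _ => ?_
      constructor
      · intro hnd
        by_contra hni
        push_neg at hni
        obtain ⟨j₀, hj₀⟩ := hni
        apply hnd
        refine ⟨i₀, ?_, Finset.univ, ?_, ?_, j₀, mem_univ _, ?_⟩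
        · rintro rfl; exact hj₀ (h₀ j₀)
        · rw [card_univ, Fintype.card_fin]; omega
        · intro j _; rw [h₀ j]; exact Nat.zero_le _
        · rw [h₀ j₀]; omega
      · intro hz
        rintro ⟨i', -, S, -, hle, j, hjS, hlt⟩
        have := hz j
        have := hle j hjS
        omega
    have hsub : {ω : Fin n → P | (univ.filter
          (fun i : Fin n => ¬∃ i' : Fin n, i' ≠ i ∧
              KDominatesCat k (ω i') (ω i))).card ≠
        (univ.filter (fun i : Fin n => ∀ j, ((ω i j : ℕ) = 0))).card}
        ⊆ ↑(univ.filter fun ω : Fin n → P => ∀ i, ω i ≠ p₀) := by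
      intro ω hω
      simp only [Set.mem_setOf_eq] at hω
      simp only [Finset.coe_filter, mem_univ, true_and, Set.mem_setOf_eq]
      intro i hi
      exact hω (by rw [dom ω i ((hzero (ω i)).2 hi)])
    refine le_trans (measure_mono hsub) ?_
    rw [hmeas, count_none, hconv, hcardP, ← hU]
    refine le_of_eq (congrArg ENNReal.ofReal ?_)
    have := real_calc n 0 m hm1
    simpa using this
end
end

section
/- For n points drawn uniformly and independently from [0,1]^d and 1 ≤ k ≤ d−1, the expected number of k-dominant skyline points satisfies E[M_{d,k}(n)] ≥ n · β_{d,k} ∫_{β_{d,k}}^1 t^{−2} (1−t)^{n−1} dt, where β_{d,k} = 2^{−d} ∑_{j=0}^{d−k} binom(d,j). -/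
open MeasureTheory Finset intervalIntegral

section aux
variable {d k : ℕ}

lemma meas_set (k : ℕ) : MeasurableSet {p : (Fin d → ℝ) × (Fin d → ℝ) |
    (∀ j, p.2 j ∈ Set.Icc (0 : ℝ) 1) ∧ KDominates k p.2 p.1} := by
  have h1 : MeasurableSet {p : (Fin d → ℝ) × (Fin d → ℝ) | ∀ j, p.2 j ∈ Set.Icc (0 : ℝ) 1} := by
    rw [show {p : (Fin d → ℝ) × (Fin d → ℝ) | ∀ j, p.2 j ∈ Set.Icc (0 : ℝ) 1}
      = ⋂ j, {p | p.2 j ∈ Set.Icc (0:ℝ) 1} from by ext p; simp]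
    exact MeasurableSet.iInter fun j => by
      have : Measurable fun p : (Fin d → ℝ) × (Fin d → ℝ) => p.2 j := by fun_prop
      exact this measurableSet_Icc
  have h2 : MeasurableSet {p : (Fin d → ℝ) × (Fin d → ℝ) | KDominates k p.2 p.1} := by
    rw [show {p : (Fin d → ℝ) × (Fin d → ℝ) | KDominates k p.2 p.1}
      = ⋃ S : Finset (Fin d), {p | k ≤ S.card} ∩
        ((⋂ j ∈ S, {p : (Fin d → ℝ) × (Fin d → ℝ) | p.2 j ≤ p.1 j}) ∩
          ⋃ j ∈ S, {p : (Fin d → ℝ) × (Fin d → ℝ) | p.2 j < p.1 j}) from by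
        ext p; simp [KDominates]]
    refine MeasurableSet.iUnion fun S => MeasurableSet.inter ?_ (MeasurableSet.inter ?_ ?_)
    · by_cases h : k ≤ S.card
      · simp [h]
      · simp [h]
    · exact MeasurableSet.biInter (S : Set (Fin d)).to_countable fun j _ =>
        measurableSet_le (by fun_prop) (by fun_prop)
    · exact MeasurableSet.biUnion (S : Set (Fin d)).to_countable fun j _ =>
        measurableSet_lt (by fun_prop) (by fun_prop)
  exact h1.inter h2

end aux

lemma cube_meas (d : ℕ) : MeasurableSet (Set.univ.pi fun _ : Fin d => Set.Icc (0 : ℝ) 1) :=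
  MeasurableSet.univ_pi fun _ => measurableSet_Icc

lemma intT (d : ℕ) (T : Finset (Fin d)) :
    ∫ x in (Set.univ.pi fun _ : Fin d => Set.Icc (0 : ℝ) 1),
      ∏ j, (if j ∈ T then x j else 1 - x j) = (2 : ℝ)⁻¹ ^ d := by
  set g : Fin d → ℝ → ℝ :=
    fun j => (Set.Icc (0 : ℝ) 1).indicator (fun a => if j ∈ T then a else 1 - a) with hg
  have key : (Set.univ.pi fun _ : Fin d => Set.Icc (0 : ℝ) 1).indicator
      (fun x => ∏ j, (if j ∈ T then x j else 1 - x j)) = fun x => ∏ j, g j (x j) := by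
    ext x
    by_cases hx : x ∈ (Set.univ.pi fun _ : Fin d => Set.Icc (0 : ℝ) 1)
    · rw [Set.indicator_of_mem hx]
      refine Finset.prod_congr rfl fun j _ => ?_
      simp only [hg]; rw [Set.indicator_of_mem (hx j trivial)]
    · rw [Set.indicator_of_notMem hx]
      rw [Set.mem_univ_pi] at hx
      push_neg at hx
      obtain ⟨j, hj⟩ := hx
      refine (Finset.prod_eq_zero (Finset.mem_univ j) ?_).symm
      simp only [hg]; exact Set.indicator_of_notMem hj _
  rw [← MeasureTheory.integral_indicator (cube_meas d), key, MeasureTheory.volume_pi,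
    MeasureTheory.integral_fintype_prod_eq_prod (𝕜 := ℝ) g]
  have hgj : ∀ j, ∫ a, g j a = 1/2 := by
    intro j
    simp only [hg]
    rw [MeasureTheory.integral_indicator measurableSet_Icc]
    by_cases hjT : j ∈ T
    · simp only [hjT, if_true]
      rw [integral_Icc_eq_integral_Ioc,
        ← intervalIntegral.integral_of_le (by norm_num : (0:ℝ) ≤ 1), integral_id]
      norm_num
    · simp only [hjT, if_false]
      rw [integral_Icc_eq_integral_Ioc,
        ← intervalIntegral.integral_of_le (by norm_num : (0:ℝ) ≤ 1),
        intervalIntegral.integral_sub intervalIntegrable_const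
          intervalIntegral.intervalIntegrable_id, integral_id]
      simp; norm_num
  simp only [hgj]
  rw [Finset.prod_const]
  norm_num

lemma count_T (d k : ℕ) (hk : k ≤ d) :
    ((univ : Finset (Finset (Fin d))).filter (fun T => k ≤ T.card)).card
      = ∑ j ∈ range (d - k + 1), Nat.choose d j := by
  have h1 : (univ : Finset (Finset (Fin d))).filter (fun T => k ≤ T.card)
      = (Icc k d).biUnion (fun i => Finset.powersetCard i (univ : Finset (Fin d))) := by
    ext T
    simp only [mem_filter, mem_univ, true_and, mem_biUnion, mem_Icc, Finset.mem_powersetCard]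
    constructor
    · intro h
      exact ⟨T.card, ⟨h, le_trans (Finset.card_le_univ T) (by simp)⟩, Finset.subset_univ T, rfl⟩
    · rintro ⟨i, ⟨hki, _⟩, _, rfl⟩
      exact hki
  rw [h1, Finset.card_biUnion]
  · have h2 : ∀ i ∈ Icc k d, (Finset.powersetCard i (univ : Finset (Fin d))).card
        = Nat.choose d i := by
      intro i _
      rw [Finset.card_powersetCard]
      simp
    rw [Finset.sum_congr rfl h2]
    refine Finset.sum_nbij' (fun i => d - i) (fun j => d - j) ?_ ?_ ?_ ?_ ?_
    · intro i hi
      simp only [mem_Icc] at hi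
      simp only [mem_range]
      omega
    · intro j hj
      simp only [mem_range] at hj
      simp only [mem_Icc]
      omega
    · intro i hi; simp only [mem_Icc] at hi; omega
    · intro j hj; simp only [mem_range] at hj; omega
    · intro i hi
      simp only [mem_Icc] at hi
      rw [Nat.choose_symm hi.2]
  · intro i hi j hj hij
    intro s hs1 hs2
    simp only [Finset.le_eq_subset, Finset.bot_eq_empty]
    intro T hT
    exfalso
    have h1 := Finset.mem_powersetCard.mp (hs1 hT)
    have h2 := Finset.mem_powersetCard.mp (hs2 hT)
    exact hij (h1.2.symm.trans h2.2)

lemma pointwise_bound (d k : ℕ) (x : Fin d → ℝ)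
    (hx : x ∈ Set.univ.pi fun _ : Fin d => Set.Icc (0 : ℝ) 1) :
    (volume {y : Fin d → ℝ | (∀ j, y j ∈ Set.Icc (0 : ℝ) 1) ∧ KDominates k y x}).toReal
      ≤ ∑ T ∈ (univ : Finset (Finset (Fin d))).filter (fun T => k ≤ T.card),
          ∏ j, (if j ∈ T then x j else 1 - x j) := by
  classical
  set 𝒯 := (univ : Finset (Finset (Fin d))).filter (fun T => k ≤ T.card) with h𝒯
  set Box : Finset (Fin d) → Set (Fin d → ℝ) :=
    fun T => Set.univ.pi fun j => if j ∈ T then Set.Icc 0 (x j) else Set.Ioc (x j) 1 with hBox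
  have hxj : ∀ j, 0 ≤ x j ∧ x j ≤ 1 := fun j => (hx j trivial : x j ∈ Set.Icc (0:ℝ) 1)
  have hsub : {y : Fin d → ℝ | (∀ j, y j ∈ Set.Icc (0 : ℝ) 1) ∧ KDominates k y x}
      ⊆ ⋃ T ∈ 𝒯, Box T := by
    rintro y ⟨hy, S, hS, hle, -⟩
    have hST : S ⊆ univ.filter (fun j => y j ≤ x j) := fun j hj => by
      simp only [mem_filter, mem_univ, true_and]; exact hle j hj
    have hmem : univ.filter (fun j => y j ≤ x j) ∈ 𝒯 := by
      simp only [h𝒯, mem_filter, mem_univ, true_and]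
      exact le_trans hS (Finset.card_le_card hST)
    refine Set.mem_biUnion hmem ?_
    intro j _
    simp only [hBox]
    by_cases hj : y j ≤ x j
    · simp only [mem_filter, mem_univ, true_and, hj, if_true]
      exact ⟨(hy j).1, hj⟩
    · simp only [mem_filter, mem_univ, true_and, hj, if_false]
      exact ⟨lt_of_not_ge hj, (hy j).2⟩
  have hBoxvol : ∀ T : Finset (Fin d),
      volume (Box T) = ENNReal.ofReal (∏ j, (if j ∈ T then x j else 1 - x j)) := by
    intro T
    rw [hBox]
    rw [volume_pi_pi]
    have step : ∀ j ∈ (univ : Finset (Fin d)),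
        volume (if j ∈ T then Set.Icc 0 (x j) else Set.Ioc (x j) 1)
          = ENNReal.ofReal (if j ∈ T then x j else 1 - x j) := by
      intro j _
      by_cases hj : j ∈ T
      · simp [hj, Real.volume_Icc]
      · simp [hj, Real.volume_Ioc]
    rw [Finset.prod_congr rfl step, ← ENNReal.ofReal_prod_of_nonneg]
    intro j _
    by_cases hj : j ∈ T
    · simp [hj, (hxj j).1]
    · simp [hj]; linarith [(hxj j).2]
  have hnn : (0:ℝ) ≤ ∑ T ∈ 𝒯, ∏ j, (if j ∈ T then x j else 1 - x j) := by
    refine Finset.sum_nonneg fun T _ => Finset.prod_nonneg fun j _ => ?_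
    by_cases hj : j ∈ T
    · simp [hj, (hxj j).1]
    · simp [hj]; linarith [(hxj j).2]
  refine ENNReal.toReal_le_of_le_ofReal hnn ?_
  calc volume {y : Fin d → ℝ | (∀ j, y j ∈ Set.Icc (0 : ℝ) 1) ∧ KDominates k y x}
      ≤ volume (⋃ T ∈ 𝒯, Box T) := measure_mono hsub
    _ ≤ ∑ T ∈ 𝒯, volume (Box T) := measure_biUnion_finset_le 𝒯 Box
    _ = ENNReal.ofReal (∑ T ∈ 𝒯, ∏ j, (if j ∈ T then x j else 1 - x j)) := by
        rw [ENNReal.ofReal_sum_of_nonneg]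
        · exact Finset.sum_congr rfl fun T _ => hBoxvol T
        · intro T _
          refine Finset.prod_nonneg fun j _ => ?_
          by_cases hj : j ∈ T
          · simp [hj, (hxj j).1]
          · simp [hj]; linarith [(hxj j).2]

lemma measurable_f (d k : ℕ) : Measurable fun x : Fin d → ℝ =>
    (volume {y : Fin d → ℝ | (∀ j, y j ∈ Set.Icc (0 : ℝ) 1) ∧ KDominates k y x}).toReal := by
  have h := measurable_measure_prodMk_left (ν := (volume : Measure (Fin d → ℝ))) (meas_set k)
  exact h.ennreal_toReal

lemma f_nonneg (d k : ℕ) (x : Fin d → ℝ) :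
    0 ≤ (volume {y : Fin d → ℝ | (∀ j, y j ∈ Set.Icc (0 : ℝ) 1) ∧ KDominates k y x}).toReal :=
  ENNReal.toReal_nonneg

lemma f_le_one (d k : ℕ) (x : Fin d → ℝ) :
    (volume {y : Fin d → ℝ | (∀ j, y j ∈ Set.Icc (0 : ℝ) 1) ∧ KDominates k y x}).toReal ≤ 1 := by
  refine ENNReal.toReal_le_of_le_ofReal zero_le_one ?_
  have h1 : {y : Fin d → ℝ | (∀ j, y j ∈ Set.Icc (0 : ℝ) 1) ∧ KDominates k y x}
      ⊆ Set.univ.pi fun _ : Fin d => Set.Icc (0 : ℝ) 1 := by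
    rintro y ⟨hy, -⟩ j -
    exact hy j
  calc volume {y : Fin d → ℝ | (∀ j, y j ∈ Set.Icc (0 : ℝ) 1) ∧ KDominates k y x}
      ≤ volume (Set.univ.pi fun _ : Fin d => Set.Icc (0 : ℝ) 1) := measure_mono h1
    _ = 1 := by rw [volume_pi_pi]; simp
    _ = ENNReal.ofReal 1 := by simp

lemma cube_compact (d : ℕ) : IsCompact (Set.univ.pi fun _ : Fin d => Set.Icc (0 : ℝ) 1) :=
  isCompact_univ_pi fun _ => isCompact_Icc

lemma cube_vol (d : ℕ) : volume (Set.univ.pi fun _ : Fin d => Set.Icc (0 : ℝ) 1) = 1 := by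
  rw [volume_pi_pi]; simp

lemma integrable_f (d k : ℕ) : IntegrableOn
    (fun x : Fin d → ℝ =>
      (volume {y : Fin d → ℝ | (∀ j, y j ∈ Set.Icc (0 : ℝ) 1) ∧ KDominates k y x}).toReal)
    (Set.univ.pi fun _ : Fin d => Set.Icc (0 : ℝ) 1) volume := by
  haveI : IsFiniteMeasure (volume.restrict (Set.univ.pi fun _ : Fin d => Set.Icc (0 : ℝ) 1)) :=
    ⟨by rw [Measure.restrict_apply_univ, cube_vol]; exact ENNReal.one_lt_top⟩
  refine Integrable.mono' (integrable_const 1) ((measurable_f d k).aestronglyMeasurable) ?_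
  refine Filter.Eventually.of_forall fun x => ?_
  rw [Real.norm_eq_abs, abs_of_nonneg (f_nonneg d k x)]
  exact f_le_one d k x

lemma integral_f_le (d k : ℕ) (hk : k ≤ d) :
    ∫ x in (Set.univ.pi fun _ : Fin d => Set.Icc (0 : ℝ) 1),
      (volume {y : Fin d → ℝ | (∀ j, y j ∈ Set.Icc (0 : ℝ) 1) ∧ KDominates k y x}).toReal
    ≤ (2 : ℝ)⁻¹ ^ d * ∑ j ∈ Finset.range (d - k + 1), (d.choose j : ℝ) := by
  classical
  set 𝒯 := (univ : Finset (Finset (Fin d))).filter (fun T => k ≤ T.card) with h𝒯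
  have hGc : Continuous fun x : Fin d → ℝ =>
      ∑ T ∈ 𝒯, ∏ j, (if j ∈ T then x j else 1 - x j) := by
    refine continuous_finset_sum _ fun T _ => continuous_finset_prod _ fun j _ => ?_
    by_cases hj : j ∈ T
    · simpa [hj] using continuous_apply j
    · simp only [hj, if_false]; exact continuous_const.sub (continuous_apply j)
  have hGint : IntegrableOn (fun x : Fin d → ℝ =>
      ∑ T ∈ 𝒯, ∏ j, (if j ∈ T then x j else 1 - x j))
      (Set.univ.pi fun _ : Fin d => Set.Icc (0 : ℝ) 1) volume :=
    hGc.continuousOn.integrableOn_compact (cube_compact d)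
  have step1 := setIntegral_mono_on (integrable_f d k) hGint (cube_meas d)
    (fun x hx => pointwise_bound d k x hx)
  refine le_trans step1 ?_
  have step2 : ∫ x in (Set.univ.pi fun _ : Fin d => Set.Icc (0 : ℝ) 1),
      (∑ T ∈ 𝒯, ∏ j, (if j ∈ T then x j else 1 - x j))
      = ∑ T ∈ 𝒯, ∫ x in (Set.univ.pi fun _ : Fin d => Set.Icc (0 : ℝ) 1),
          ∏ j, (if j ∈ T then x j else 1 - x j) := by
    refine integral_finset_sum _ fun T _ => ?_
    have hc : Continuous fun x : Fin d → ℝ => ∏ j, (if j ∈ T then x j else 1 - x j) := by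
      refine continuous_finset_prod _ fun j _ => ?_
      by_cases hj : j ∈ T
      · simpa [hj] using continuous_apply j
      · simp only [hj, if_false]; exact continuous_const.sub (continuous_apply j)
    exact hc.continuousOn.integrableOn_compact (cube_compact d)
  rw [step2]
  have step3 : ∀ T ∈ 𝒯, ∫ x in (Set.univ.pi fun _ : Fin d => Set.Icc (0 : ℝ) 1),
      ∏ j, (if j ∈ T then x j else 1 - x j) = (2 : ℝ)⁻¹ ^ d := fun T _ => intT d T
  rw [Finset.sum_congr rfl step3, Finset.sum_const, count_T d k hk, nsmul_eq_mul]
  rw [Nat.cast_sum, mul_comm]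

lemma hderiv_pow (m : ℕ) (t : ℝ) :
    HasDerivAt (fun t : ℝ => -(1 - t) ^ (m + 1)) (((m : ℝ) + 1) * (1 - t) ^ m) t := by
  have h1 : HasDerivAt (fun t : ℝ => 1 - t) (-1) t := (hasDerivAt_id t).const_sub 1
  have h2 := (h1.pow (m + 1)).neg
  refine h2.congr_deriv ?_
  simp

lemma ftc_pow (m : ℕ) (a : ℝ) :
    ∫ t in a..1, ((m : ℝ) + 1) * (1 - t) ^ m = (1 - a) ^ (m + 1) := by
  rw [integral_eq_sub_of_hasDerivAt (fun t _ => hderiv_pow m t)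
    (Continuous.intervalIntegrable (by continuity) a 1)]
  simp

lemma byparts (m : ℕ) (b : ℝ) (hb0 : 0 < b) (hb1 : b ≤ 1) :
    b * ∫ t in b..1, t⁻¹ ^ 2 * (1 - t) ^ (m + 1)
      = ∫ t in b..1, (1 - b / t) * (((m : ℝ) + 1) * (1 - t) ^ m) := by
  have huIcc : Set.uIcc b 1 = Set.Icc b 1 := Set.uIcc_of_le hb1
  have hsub : Set.uIcc b 1 ⊆ {t : ℝ | t ≠ 0} := by
    rw [huIcc]; intro t ht; exact ne_of_gt (lt_of_lt_of_le hb0 ht.1)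
  have hA : IntervalIntegrable (fun t : ℝ => b * (t⁻¹ ^ 2 * (1 - t) ^ (m + 1))) volume b 1 := by
    apply ContinuousOn.intervalIntegrable
    exact continuousOn_const.mul
      (((continuousOn_inv₀.mono hsub).pow 2).mul (Continuous.continuousOn (by continuity)))
  have hB : IntervalIntegrable (fun t : ℝ => (1 - b / t) * (((m : ℝ) + 1) * (1 - t) ^ m))
      volume b 1 := by
    apply ContinuousOn.intervalIntegrable
    refine ContinuousOn.mul (continuousOn_const.sub ?_) (Continuous.continuousOn (by continuity))
    exact continuousOn_const.div continuousOn_id (fun t ht => hsub ht)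
  have hH : ∀ t ∈ Set.uIcc b 1, HasDerivAt (fun t : ℝ => (1 - b / t) * (1 - t) ^ (m + 1))
      (b * (t⁻¹ ^ 2 * (1 - t) ^ (m + 1)) - (1 - b / t) * (((m : ℝ) + 1) * (1 - t) ^ m)) t := by
    intro t ht
    have ht0 : t ≠ 0 := hsub ht
    have h1 : HasDerivAt (fun t : ℝ => 1 - b / t) (b * (t ^ 2)⁻¹) t := by
      have := ((hasDerivAt_inv ht0).const_mul b).const_sub 1
      refine this.congr_deriv ?_
      field_simp
    have h2 : HasDerivAt (fun t : ℝ => (1 - t) ^ (m + 1))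
        (-(((m : ℝ) + 1) * (1 - t) ^ m)) t := by
      have := ((hasDerivAt_id t).const_sub 1).pow (m + 1)
      refine this.congr_deriv ?_
      simp
    have h3 := h1.mul h2
    refine h3.congr_deriv ?_
    field_simp
    ring
  have key := integral_eq_sub_of_hasDerivAt hH (hA.sub hB)
  have hz : (fun t : ℝ => (1 - b / t) * (1 - t) ^ (m + 1)) 1
      - (fun t : ℝ => (1 - b / t) * (1 - t) ^ (m + 1)) b = 0 := by
    simp only []
    rw [div_self (ne_of_gt hb0)]
    simp
  rw [intervalIntegral.integral_sub hA hB, hz] at key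
  have := sub_eq_zero.mp key
  rw [← this, intervalIntegral.integral_const_mul]
lemma key_analytic {α : Type*} [MeasurableSpace α] (μ : Measure α) [IsFiniteMeasure μ]
    (hμ : μ Set.univ = 1) (f : α → ℝ) (hf : Measurable f) (h0 : ∀ x, 0 ≤ f x)
    (h1 : ∀ x, f x ≤ 1) (b : ℝ) (hb0 : 0 < b) (hb1 : b ≤ 1)
    (hint : ∫ x, f x ∂μ ≤ b) (m : ℕ) :
    b * ∫ t in b..1, t⁻¹ ^ 2 * (1 - t) ^ (m + 1) ≤ ∫ x, (1 - f x) ^ (m + 1) ∂μ := by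
  set ν : Measure ℝ := volume.restrict (Set.Ioc b 1) with hν
  haveI : IsFiniteMeasure ν := by
    refine ⟨?_⟩
    rw [hν, Measure.restrict_apply_univ, Real.volume_Ioc]
    exact ENNReal.ofReal_lt_top
  set g : α → ℝ → ℝ := fun x t => (if f x ≤ t then (1 : ℝ) else 0) * (((m : ℝ) + 1) * (1 - t) ^ m)
    with hg
  -- integrability of f
  have hfint : Integrable f μ := by
    refine Integrable.mono' (integrable_const 1) hf.aestronglyMeasurable ?_
    refine Filter.Eventually.of_forall fun x => ?_
    rw [Real.norm_eq_abs, abs_of_nonneg (h0 x)]; exact h1 x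
  -- measurability of uncurried g
  have hmeas : Measurable (Function.uncurry g) := by
    have h1' : MeasurableSet {p : α × ℝ | f p.1 ≤ p.2} :=
      measurableSet_le (hf.comp measurable_fst) measurable_snd
    have h2' : Measurable fun p : α × ℝ => ((m : ℝ) + 1) * (1 - p.2) ^ m := by fun_prop
    exact (Measurable.ite h1' measurable_const measurable_const).mul h2'
  -- a.e. the second coordinate is in Ioc b 1
  have hae : ∀ᵐ p ∂(μ.prod ν), p.2 ∈ Set.Ioc b 1 := by
    rw [ae_iff]
    have hset : {p : α × ℝ | ¬ p.2 ∈ Set.Ioc b 1} = Set.univ ×ˢ (Set.Ioc b 1)ᶜ := by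
      ext p; simp
    rw [hset, Measure.prod_prod, hν, Measure.restrict_apply measurableSet_Ioc.compl]
    simp
  -- integrability of g on the product
  have hgint : Integrable (Function.uncurry g) (μ.prod ν) := by
    refine Integrable.mono' (integrable_const ((m : ℝ) + 1)) hmeas.aestronglyMeasurable ?_
    refine hae.mono fun p hp => ?_
    rw [Function.uncurry, hg]
    simp only []
    rw [Real.norm_eq_abs, abs_mul, abs_mul]
    have e1 : |if f p.1 ≤ p.2 then (1:ℝ) else 0| ≤ 1 := by
      by_cases h : f p.1 ≤ p.2 <;> simp [h]
    have e2 : |(1 - p.2) ^ m| ≤ 1 := by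
      rw [abs_pow]
      refine pow_le_one₀ (abs_nonneg _) ?_
      rw [abs_le]; constructor <;> [linarith [hp.2]; linarith [hp.1, hb0]]
    have e3 : |((m : ℝ) + 1)| = (m : ℝ) + 1 := abs_of_nonneg (by positivity)
    calc |if f p.1 ≤ p.2 then (1:ℝ) else 0| * (|((m : ℝ) + 1)| * |(1 - p.2) ^ m|)
        ≤ 1 * (((m : ℝ) + 1) * 1) := by
          rw [e3]
          refine mul_le_mul e1 (mul_le_mul_of_nonneg_left e2 (by positivity)) (by positivity)
            zero_le_one
      _ = (m : ℝ) + 1 := by ring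
  -- Markov inequality
  have markov : ∀ t ∈ Set.Ioc b 1, 1 - b / t ≤ (μ {x | f x ≤ t}).toReal := by
    intro t ht
    have ht0 : 0 < t := lt_trans hb0 ht.1
    have h2 := mul_meas_ge_le_integral_of_nonneg
      (Filter.Eventually.of_forall h0) hfint t
    have h3 : (μ {x | t ≤ f x}).toReal ≤ b / t := by
      rw [le_div_iff₀ ht0, mul_comm]
      exact le_trans h2 hint
    have hcompl : {x | f x ≤ t}ᶜ ⊆ {x | t ≤ f x} := by
      intro x hx
      simp only [Set.mem_compl_iff, Set.mem_setOf_eq, not_le] at hx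
      exact le_of_lt hx
    have h4 : (μ {x | f x ≤ t}ᶜ).toReal ≤ b / t :=
      le_trans (ENNReal.toReal_mono (measure_ne_top μ _) (measure_mono hcompl)) h3
    have h5 : (μ {x | f x ≤ t}).toReal + (μ {x | f x ≤ t}ᶜ).toReal = 1 := by
      rw [← ENNReal.toReal_add (measure_ne_top μ _) (measure_ne_top μ _),
        measure_add_measure_compl (measurableSet_le hf measurable_const), hμ]
      simp
    linarith
  -- inner integral over x, for fixed t
  have hinner : ∀ t : ℝ, ∫ x, g x t ∂μ
      = (μ {x | f x ≤ t}).toReal * (((m : ℝ) + 1) * (1 - t) ^ m) := by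
    intro t
    rw [hg]
    simp only []
    rw [MeasureTheory.integral_mul_const]
    congr 1
    have : (fun x => if f x ≤ t then (1:ℝ) else 0)
        = Set.indicator {x | f x ≤ t} (fun _ => (1:ℝ)) := by
      ext x; by_cases h : f x ≤ t <;> simp [Set.indicator_apply, h]
    rw [this]
    simpa [measureReal_def] using integral_indicator_const (1:ℝ) (measurableSet_le hf measurable_const) (μ := μ)
  -- inner integral over t, for fixed x
  have houter : ∀ x : α, ∫ t, g x t ∂ν ≤ (1 - f x) ^ (m + 1) := by
    intro x
    set c : ℝ := max b (f x) with hc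
    have hbc : b ≤ c := le_max_left _ _
    have hc1 : c ≤ 1 := max_le hb1 (h1 x)
    have hfc : f x ≤ c := le_max_right _ _
    have hii : ∀ u v : ℝ, IntervalIntegrable (g x) volume u v := by
      intro u v
      have hm : Measurable (g x) := by
        have h1' : MeasurableSet {t : ℝ | f x ≤ t} := measurableSet_Ici
        exact (Measurable.ite h1' measurable_const measurable_const).mul (by fun_prop)
      have h5 : ∀ t ∈ Set.Ioc u v ∪ Set.Ioc v u, |1 - t| ≤ 1 + |u| + |v| := by
        intro t ht
        have l1 := neg_abs_le u
        have l2 := le_abs_self v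
        have l3 := neg_abs_le v
        have l4 := le_abs_self u
        rcases ht with ht | ht
        · rw [abs_le]; constructor <;> linarith [ht.1, ht.2]
        · rw [abs_le]; constructor <;> linarith [ht.1, ht.2]
      have key : ∀ w z : ℝ, Set.Ioc w z ⊆ Set.Ioc u v ∪ Set.Ioc v u →
          IntegrableOn (g x) (Set.Ioc w z) volume := by
        intro w z hwz
        refine Integrable.mono'
          (integrable_const (((m : ℝ) + 1) * (1 + |u| + |v|) ^ m)) hm.aestronglyMeasurable ?_
        refine (ae_restrict_mem measurableSet_Ioc).mono fun t ht => ?_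
        rw [hg]
        simp only []
        rw [Real.norm_eq_abs, abs_mul, abs_mul]
        have e1 : |if f x ≤ t then (1:ℝ) else 0| ≤ 1 := by
          by_cases h : f x ≤ t <;> simp [h]
        have e2 : |(1 - t) ^ m| ≤ (1 + |u| + |v|) ^ m := by
          rw [abs_pow]
          exact pow_le_pow_left₀ (abs_nonneg _) (h5 t (hwz ht)) m
        have e3 : |((m : ℝ) + 1)| = (m : ℝ) + 1 := abs_of_nonneg (by positivity)
        calc |if f x ≤ t then (1:ℝ) else 0| * (|((m : ℝ) + 1)| * |(1 - t) ^ m|)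
            ≤ 1 * (((m : ℝ) + 1) * (1 + |u| + |v|) ^ m) := by
              rw [e3]
              refine mul_le_mul e1 (mul_le_mul_of_nonneg_left e2 (by positivity)) (by positivity)
                zero_le_one
          _ = ((m : ℝ) + 1) * (1 + |u| + |v|) ^ m := by ring
      exact ⟨key u v Set.subset_union_left, key v u Set.subset_union_right⟩
    -- split the integral at c
    have hsplit : ∫ t, g x t ∂ν = (∫ t in b..c, g x t) + ∫ t in c..1, g x t := by
      rw [hν, ← intervalIntegral.integral_of_le hb1,
        ← intervalIntegral.integral_add_adjacent_intervals (hii b c) (hii c 1)]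
    have hpiece1 : ∫ t in b..c, g x t = 0 := by
      rw [intervalIntegral.integral_of_le hbc]
      refine integral_eq_zero_of_ae ?_
      have hne : ∀ᵐ t ∂(volume.restrict (Set.Ioc b c)), t ≠ f x := by
        refine ae_restrict_of_ae ?_
        rw [ae_iff]
        have : {t : ℝ | ¬ t ≠ f x} = {f x} := by ext t; simp
        rw [this]
        exact measure_singleton _
      refine (hne.and (ae_restrict_mem measurableSet_Ioc)).mono fun t ht => ?_
      rw [hg]
      simp only []
      have hnle : ¬ f x ≤ t := by
        intro hle
        have hfx : f x < t := lt_of_le_of_ne hle (fun h => ht.1 h.symm)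
        have hct : c < t := max_lt ht.2.1 hfx
        exact absurd ht.2.2 (not_le.mpr hct)
      rw [if_neg hnle, zero_mul]
      rfl
    have hpiece2 : ∫ t in c..1, g x t = (1 - c) ^ (m + 1) := by
      rw [← ftc_pow m c]
      refine intervalIntegral.integral_congr fun t ht => ?_
      rw [Set.uIcc_of_le hc1] at ht
      rw [hg]
      simp only []
      rw [if_pos (le_trans hfc ht.1), one_mul]
    rw [hsplit, hpiece1, hpiece2, zero_add]
    refine pow_le_pow_left₀ (by linarith) (by linarith) (m + 1)
  -- assemble
  have swap := integral_integral_swap hgint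
  have step1 : b * ∫ t in b..1, t⁻¹ ^ 2 * (1 - t) ^ (m + 1)
      ≤ ∫ t, (∫ x, g x t ∂μ) ∂ν := by
    rw [byparts m b hb0 hb1, hν, intervalIntegral.integral_of_le hb1]
    refine setIntegral_mono_on ?_ ?_ measurableSet_Ioc ?_
    · have hcont : ContinuousOn (fun t : ℝ => (1 - b / t) * (((m : ℝ) + 1) * (1 - t) ^ m))
          (Set.Icc b 1) := by
        refine ContinuousOn.mul (continuousOn_const.sub ?_)
          (Continuous.continuousOn (by continuity))
        exact continuousOn_const.div continuousOn_id
          (fun t ht => ne_of_gt (lt_of_lt_of_le hb0 ht.1))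
      exact (hcont.integrableOn_compact isCompact_Icc).mono_set Set.Ioc_subset_Icc_self
    · exact hgint.integral_prod_right
    · intro t ht
      rw [hinner t]
      have hpow : (0:ℝ) ≤ ((m : ℝ) + 1) * (1 - t) ^ m := by
        have h1t : (0:ℝ) ≤ 1 - t := by linarith [ht.2]
        have := pow_nonneg h1t m
        positivity
      exact mul_le_mul_of_nonneg_right (markov t ht) hpow
  calc b * ∫ t in b..1, t⁻¹ ^ 2 * (1 - t) ^ (m + 1)
      ≤ ∫ t, (∫ x, g x t ∂μ) ∂ν := step1
    _ = ∫ x, (∫ t, g x t ∂ν) ∂μ := swap.symm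
    _ ≤ ∫ x, (1 - f x) ^ (m + 1) ∂μ := by
        refine integral_mono ?_ ?_ houter
        · exact hgint.integral_prod_left
        · refine Integrable.mono' (integrable_const 1) ?_ ?_
          · exact ((measurable_const.sub hf).pow_const (m+1)).aestronglyMeasurable
          · refine Filter.Eventually.of_forall fun x => ?_
            rw [Real.norm_eq_abs, abs_pow]
            refine pow_le_one₀ (abs_nonneg _) ?_
            rw [abs_le]
            exact ⟨by linarith [h1 x], by linarith [h0 x]⟩

lemma int_inv_sq (b : ℝ) (hb0 : 0 < b) (hb1 : b ≤ 1) :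
    ∫ t in b..1, t⁻¹ ^ 2 = b⁻¹ - 1 := by
  have hsub : Set.uIcc b 1 ⊆ {t : ℝ | t ≠ 0} := by
    rw [Set.uIcc_of_le hb1]; intro t ht; exact ne_of_gt (lt_of_lt_of_le hb0 ht.1)
  have hH : ∀ t ∈ Set.uIcc b 1, HasDerivAt (fun t : ℝ => -t⁻¹) (t⁻¹ ^ 2) t := by
    intro t ht
    have := (hasDerivAt_inv (hsub ht)).neg
    refine this.congr_deriv ?_
    rw [inv_pow]
    ring
  have hint : IntervalIntegrable (fun t : ℝ => t⁻¹ ^ 2) volume b 1 :=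
    ContinuousOn.intervalIntegrable ((continuousOn_inv₀.mono hsub).pow 2)
  rw [integral_eq_sub_of_hasDerivAt hH hint]
  simp
  ring

/-- Uniform lower bound: with `β_{d,k} = 2^{−d} ∑_{j≤d−k} binom(d,j)`,
`E[M_{d,k}(n)] = n ∫_{[0,1]^d} (1−|B_k(x)|)^{n−1} dx
  ≥ n β_{d,k} ∫_{β_{d,k}}^1 t^{−2}(1−t)^{n−1} dt`. -/
theorem lower_bound_EM (d k n : ℕ) (hd : 2 ≤ d) (hk1 : 1 ≤ k) (hkd : k ≤ d - 1)
    (hn : 1 ≤ n) :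
    (n : ℝ) * ((2 : ℝ)⁻¹ ^ d * ∑ j ∈ Finset.range (d - k + 1), (d.choose j : ℝ)) *
        ∫ t in ((2 : ℝ)⁻¹ ^ d * ∑ j ∈ Finset.range (d - k + 1), (d.choose j : ℝ))..1,
          t⁻¹ ^ 2 * (1 - t) ^ (n - 1) ≤
      (n : ℝ) * ∫ x in (Set.univ.pi fun _ : Fin d => Set.Icc (0 : ℝ) 1),
        (1 - (volume {y : Fin d → ℝ |
            (∀ j, y j ∈ Set.Icc (0 : ℝ) 1) ∧ KDominates k y x}).toReal) ^ (n - 1) := by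
  have hkd' : k ≤ d := by omega
  set B : ℝ := (2 : ℝ)⁻¹ ^ d * ∑ j ∈ Finset.range (d - k + 1), (d.choose j : ℝ) with hB
  set cube := Set.univ.pi fun _ : Fin d => Set.Icc (0 : ℝ) 1 with hcube
  set f : (Fin d → ℝ) → ℝ := fun x =>
    (volume {y : Fin d → ℝ | (∀ j, y j ∈ Set.Icc (0 : ℝ) 1) ∧ KDominates k y x}).toReal with hf
  set μ : Measure (Fin d → ℝ) := volume.restrict cube with hμ
  haveI : IsFiniteMeasure μ :=
    ⟨by rw [hμ, Measure.restrict_apply_univ, hcube, cube_vol]; exact ENNReal.one_lt_top⟩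
  have hμuniv : μ Set.univ = 1 := by
    rw [hμ, Measure.restrict_apply_univ, hcube, cube_vol]
  have hB0 : 0 < B := by
    rw [hB]
    have hterm : (1 : ℝ) ≤ ∑ j ∈ Finset.range (d - k + 1), (d.choose j : ℝ) := by
      have h0m : (0 : ℕ) ∈ Finset.range (d - k + 1) := by simp
      have := Finset.single_le_sum (f := fun j => (d.choose j : ℝ))
        (fun j _ => by positivity) h0m
      simpa using this
    positivity
  have hB1 : B ≤ 1 := by
    rw [hB]
    have hsum : ∑ j ∈ Finset.range (d - k + 1), (d.choose j : ℝ) ≤ 2 ^ d := by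
      have hsub : Finset.range (d - k + 1) ⊆ Finset.range (d + 1) :=
        Finset.range_subset_range.mpr (by omega)
      have h1 : ∑ j ∈ Finset.range (d - k + 1), (d.choose j : ℝ)
          ≤ ∑ j ∈ Finset.range (d + 1), (d.choose j : ℝ) :=
        Finset.sum_le_sum_of_subset_of_nonneg hsub (fun j _ _ => by positivity)
      refine le_trans h1 ?_
      rw [← Nat.cast_sum]
      rw [Nat.sum_range_choose]
      simp
    calc (2 : ℝ)⁻¹ ^ d * ∑ j ∈ Finset.range (d - k + 1), (d.choose j : ℝ)
        ≤ (2 : ℝ)⁻¹ ^ d * 2 ^ d := by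
          refine mul_le_mul_of_nonneg_left hsum (by positivity)
      _ = 1 := by
          rw [inv_pow, inv_mul_cancel₀ (by positivity)]
  have hint : ∫ x, f x ∂μ ≤ B := integral_f_le d k hkd'
  rw [mul_assoc]
  refine mul_le_mul_of_nonneg_left ?_ (Nat.cast_nonneg n)
  rcases Nat.lt_or_ge n 2 with hn2 | hn2
  · -- n = 1
    have hn1 : n = 1 := by omega
    subst hn1
    simp only [Nat.sub_self, pow_zero, mul_one]
    rw [int_inv_sq B hB0 hB1]
    have hrhs : ∫ x in cube, (1 : ℝ) ∂volume = 1 := by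
      rw [setIntegral_const, hcube, measureReal_def, cube_vol]
      simp
    have : ∫ (x : Fin d → ℝ) in cube, (1:ℝ) = 1 := hrhs
    rw [this]
    rw [mul_sub, mul_inv_cancel₀ (ne_of_gt hB0), mul_one]
    linarith
  · -- n ≥ 2
    obtain ⟨m, rfl⟩ : ∃ m, n = m + 2 := ⟨n - 2, by omega⟩
    have hn1 : m + 2 - 1 = m + 1 := by omega
    rw [hn1]
    exact key_analytic μ hμuniv f (measurable_f d k) (f_nonneg d k) (f_le_one d k)
      B hB0 hB1 hint m
end

section
/- For integers n ≥ 2, the fractional part of √(2 log n / W(2 log n)) is zero if and only if n = i^{i²} for some integer i ≥ 2, in which case √(2 log n / W(2 log n)) = i. -/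
private lemma mul_exp_inj {a b : ℝ} (ha : 0 < a) (hb : 0 < b)
    (h : a * Real.exp a = b * Real.exp b) : a = b := by
  rcases lt_trichotomy a b with hab | hab | hab
  · exfalso
    have := mul_lt_mul'' hab (Real.exp_lt_exp.2 hab) ha.le (Real.exp_pos a).le
    linarith
  · exact hab
  · exfalso
    have := mul_lt_mul'' hab (Real.exp_lt_exp.2 hab) hb.le (Real.exp_pos b).le
    linarith

/-- Let `W > 0` satisfy `W e^W = 2 log n` (principal Lambert `W` at `2 log n`),
`n ≥ 2`. Then the fractional part of `√(2 log n / W)` is zero iff `n = i^{i²}`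
for some integer `i ≥ 2`, in which case `√(2 log n / W) = i`. -/
theorem fract_sqrt_lambert_zero_iff (n : ℕ) (hn : 2 ≤ n) (W : ℝ) (hW : 0 < W)
    (hWeq : W * Real.exp W = 2 * Real.log n) :
    (Int.fract (Real.sqrt (2 * Real.log n / W)) = 0 ↔
        ∃ i : ℕ, 2 ≤ i ∧ n = i ^ (i ^ 2)) ∧
      ∀ i : ℕ, 2 ≤ i → n = i ^ (i ^ 2) →
        Real.sqrt (2 * Real.log n / W) = i := by
  have hn1 : (1 : ℝ) < (n : ℝ) := by exact_mod_cast lt_of_lt_of_le one_lt_two hn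
  have hdiv : 2 * Real.log n / W = Real.exp W := by
    rw [← hWeq, mul_div_cancel_left₀ _ hW.ne']
  have hexp : Real.exp W = Real.exp (W / 2) ^ 2 := by
    rw [← Real.exp_nat_mul]; ring_nf
  have hs : Real.sqrt (2 * Real.log n / W) = Real.exp (W / 2) := by
    rw [hdiv, hexp, Real.sqrt_sq (Real.exp_pos _).le]
  -- second part
  have key : ∀ i : ℕ, 2 ≤ i → n = i ^ (i ^ 2) →
      Real.sqrt (2 * Real.log n / W) = i := by
    intro i hi hni
    have hi1 : (1 : ℝ) < (i : ℝ) := by exact_mod_cast lt_of_lt_of_le one_lt_two hi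
    have hlogi : 0 < Real.log i := Real.log_pos hi1
    have hcast : (n : ℝ) = (i : ℝ) ^ (i ^ 2) := by exact_mod_cast hni
    have hlogn : Real.log n = (i ^ 2 : ℕ) * Real.log i := by
      rw [hcast, Real.log_pow]
    have hW2 : W = 2 * Real.log i := by
      apply mul_exp_inj hW (by positivity)
      rw [hWeq, hlogn]
      have : Real.exp (2 * Real.log i) = (i : ℝ) ^ 2 := by
        rw [mul_comm, Real.exp_mul, Real.exp_log (by positivity), Real.rpow_two]
      rw [this]
      push_cast
      ring
    rw [hs, hW2]
    rw [mul_div_cancel_left₀ _ (two_ne_zero), Real.exp_log (by positivity)]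
  refine ⟨⟨?_, ?_⟩, key⟩
  · intro hfr
    set s := Real.sqrt (2 * Real.log n / W) with hsdef
    have hse : s = ⌊s⌋ := by
      have := Int.fract_add_floor s
      rw [hfr] at this; linarith
    have hs1 : 1 < s := by
      rw [hs]
      have : Real.exp 0 < Real.exp (W / 2) := Real.exp_lt_exp.2 (by linarith)
      simpa using this
    have hm2 : 2 ≤ ⌊s⌋ := by
      by_contra h
      push_neg at h
      have : (⌊s⌋ : ℝ) ≤ 1 := by exact_mod_cast Int.lt_add_one_iff.mp h
      linarith [hse ▸ hs1]
    set i : ℕ := ⌊s⌋.toNat with hidef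
    have hic : (i : ℝ) = (⌊s⌋ : ℝ) := by
      exact_mod_cast congrArg (Int.cast : ℤ → ℝ) (Int.toNat_of_nonneg (by omega))
    have hi2 : 2 ≤ i := by omega
    refine ⟨i, ?_, ?_⟩
    · exact hi2
    · have hsi : s = (i : ℝ) := by rw [hic, ← hse]
      have hi1 : (1 : ℝ) < (i : ℝ) := by rw [← hsi]; exact hs1
      have hW2 : W = 2 * Real.log i := by
        have : Real.exp (W / 2) = (i : ℝ) := by rw [← hs]; exact hsi
        have := congrArg Real.log this
        rw [Real.log_exp] at this
        linarith
      have hlogn : Real.log n = Real.log ((i : ℝ) ^ (i ^ 2)) := by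
        have h1 : 2 * Real.log n = W * Real.exp W := hWeq.symm
        rw [hW2] at h1
        have he : Real.exp (2 * Real.log i) = (i : ℝ) ^ 2 := by
          rw [mul_comm, Real.exp_mul, Real.exp_log (by positivity), Real.rpow_two]
        rw [he] at h1
        rw [Real.log_pow]
        push_cast
        nlinarith [h1]
      have := Real.log_injOn_pos.eq_iff (by simp; linarith) (by
          simp [Set.mem_Ioi]; positivity) |>.mp hlogn
      exact_mod_cast this
  · rintro ⟨i, hi, hni⟩
    rw [key i hi hni]
    simp [Int.fract_natCast]
end
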